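/- arXiv:2001.04399 — 5 statements merged into one kernel-verified Lean document; each statement's English description precedes it below -/
import Mathlib

section
/- Let G be a complex simply-laced semisimple algebraic group of rank r, let i = (i_1,…,i_n) ∈ [r]^n be a word, and let λ = Σ_{i=1}^r λ_i ϖ_i be a dominant weight. Let c = c(i) be determined from i by c_{jk} = ⟨α_{i_k}, α_{i_j}^∨⟩, and let ℓ = (ℓ_1,…,ℓ_n) be given by ℓ_j = λ_{i_j} for 1 ≤ j ≤ n. Then the corresponding Grossberg–Karshon twisted cube (C(c,ℓ), ρ) is untwisted if and only if i is hesitant-λ-walk-avoiding. -/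
open Finset

attribute [local instance] Classical.propDecidable

/-- Distance from a vertex to a set of vertices (in `ℕ∞`; `⊤` for empty set or
unreachable vertices), i.e. `d(v, A) = min { d(v,a) : a ∈ A }`. -/
noncomputable def dSet {V : Type*} (Γ : SimpleGraph V) (v : V) (A : Set V) : ℕ∞ :=
  ⨅ a ∈ A, Γ.edist v a

/-- Cartan integers of a simply-laced group whose Dynkin diagram is the graph `Γ`:
`c̄_{a,b} = 2` if `a = b`, `-1` if `d(a,b) = 1`, and `0` otherwise. -/
noncomputable def cartan {V : Type*} (Γ : SimpleGraph V) (a b : V) : ℤ :=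
  if a = b then 2 else if Γ.edist a b = 1 then -1 else 0

/-- A word `(i 0, …, i (n-1))` is a jumping walk if `d(i j, {i 0, …, i (j-1)}) = 1`
for all `1 ≤ j < n`. -/
def IsJumpingWalk {V : Type*} (Γ : SimpleGraph V) (n : ℕ) (i : ℕ → V) : Prop :=
  ∀ j, 1 ≤ j → j < n → dSet Γ (i j) {x | ∃ k, k < j ∧ i k = x} = 1

/-- A word `(i 0, …, i (m-1))` is a hesitant jumping walk if `m ≥ 2`, `i 0 = i 1`,
and the tail `(i 1, …, i (m-1))` is a jumping walk. -/
def IsHesitantJumpingWalk {V : Type*} (Γ : SimpleGraph V) (m : ℕ) (i : ℕ → V) : Prop :=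
  2 ≤ m ∧ i 0 = i 1 ∧ IsJumpingWalk Γ (m - 1) (fun t => i (t + 1))

/-- A word `(i 0, …, i (m-1))` with nonnegative integers `(ℓ 0, …, ℓ (m-1))` is a
hesitant jumping `ℓ`-walk if it is a hesitant jumping walk and
`ℓ 0 - ℓ 1 < ℓ 1 + ⋯ + ℓ (m-1)`. -/
def IsHesitantJumpingLWalk {V : Type*} (Γ : SimpleGraph V) (m : ℕ) (i : ℕ → V)
    (ℓ : ℕ → ℤ) : Prop :=
  IsHesitantJumpingWalk Γ m i ∧ ℓ 0 - ℓ 1 < ∑ t ∈ Finset.Ico 1 m, ℓ t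

/-- The word `(i 0, …, i (n-1))` with `(ℓ 0, …, ℓ (n-1))` is
hesitant-jumping-`ℓ`-walk-avoiding if no subword (indexed by a strictly increasing
sequence `j`) is a hesitant jumping walk for the corresponding subsequence of `ℓ`. -/
def IsHJLWalkAvoiding {V : Type*} (Γ : SimpleGraph V) (n : ℕ) (i : ℕ → V)
    (ℓ : ℕ → ℤ) : Prop :=
  ¬ ∃ (m : ℕ) (j : ℕ → ℕ), StrictMono j ∧ (∀ t, t < m → j t < n) ∧
      IsHesitantJumpingLWalk Γ m (fun t => i (j t)) (fun t => ℓ (j t))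

/-- A word `(i 0, …, i (n-1))` is a diagram walk if `d(i j, i (j+1)) = 1` for all
`0 ≤ j < n - 1`. -/
def IsDiagramWalk {V : Type*} (Γ : SimpleGraph V) (n : ℕ) (i : ℕ → V) : Prop :=
  ∀ j, j + 1 < n → Γ.edist (i j) (i (j + 1)) = 1

/-- For a dominant weight `λ = Σ λ_i ϖ_i`, a word `(i 0, …, i (m-1))` is a hesitant
`λ`-walk if `m ≥ 2`, `i 0 = i 1`, the tail `(i 1, …, i (m-1))` is a diagram walk, and
`λ_{i (m-1)} > 0`. -/
def IsHesitantLamWalk {V : Type*} (Γ : SimpleGraph V) (m : ℕ) (i : ℕ → V)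
    (lam : V → ℤ) : Prop :=
  2 ≤ m ∧ i 0 = i 1 ∧ IsDiagramWalk Γ (m - 1) (fun t => i (t + 1)) ∧ 0 < lam (i (m - 1))

/-- The word `(i 0, …, i (n-1))` is hesitant-`λ`-walk-avoiding if no subword is a
hesitant `λ`-walk. -/
def IsHLamWalkAvoiding {V : Type*} (Γ : SimpleGraph V) (n : ℕ) (i : ℕ → V)
    (lam : V → ℤ) : Prop :=
  ¬ ∃ (m : ℕ) (j : ℕ → ℕ), StrictMono j ∧ (∀ t, t < m → j t < n) ∧
      IsHesitantLamWalk Γ m (fun t => i (j t)) lam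

/-- The function `A_j(x) = ℓ_j - Σ_{k > j} c_{jk} x_k` (indices `0,…,n-1`). -/
def Afun (n : ℕ) (c : ℕ → ℕ → ℤ) (ℓ : ℕ → ℤ) (j : ℕ) (x : Fin n → ℝ) : ℝ :=
  (ℓ j : ℝ) - ∑ k : Fin n, if j < (k : ℕ) then (c j (k : ℕ) : ℝ) * x k else 0

/-- The Grossberg–Karshon twisted cube
`C(c, ℓ) = {x ∈ ℝ^n | ∀ j, A_j(x) < x_j < 0 or 0 ≤ x_j ≤ A_j(x)}`. -/
def twistedCube (n : ℕ) (c : ℕ → ℕ → ℤ) (ℓ : ℕ → ℤ) : Set (Fin n → ℝ) :=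
  {x | ∀ j : Fin n,
    (Afun n c ℓ (j : ℕ) x < x j ∧ x j < 0) ∨ (0 ≤ x j ∧ x j ≤ Afun n c ℓ (j : ℕ) x)}

/-- `sgn(t) = 1` for `t < 0` and `sgn(t) = -1` for `t ≥ 0`. -/
noncomputable def gkSgn (t : ℝ) : ℝ := if t < 0 then 1 else -1

/-- The density function `ρ` of the Grossberg–Karshon twisted cube:
`ρ(x) = (-1)^n Π_k sgn(x_k)` on `C(c,ℓ)` and `0` elsewhere. -/
noncomputable def gkRho (n : ℕ) (c : ℕ → ℕ → ℤ) (ℓ : ℕ → ℤ) (x : Fin n → ℝ) : ℝ :=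
  if x ∈ twistedCube n c ℓ then (-1 : ℝ) ^ n * ∏ k : Fin n, gkSgn (x k) else 0

/-- The Grossberg–Karshon twisted cube `(C(c,ℓ), ρ)` is untwisted if `C(c,ℓ)` is a
closed convex polytope and the density function `ρ` equals `1` on `C(c,ℓ)`. -/
def IsUntwisted (n : ℕ) (c : ℕ → ℕ → ℤ) (ℓ : ℕ → ℤ) : Prop :=
  IsClosed (twistedCube n c ℓ) ∧ Convex ℝ (twistedCube n c ℓ) ∧
    (∃ S : Finset (Fin n → ℝ), twistedCube n c ℓ = convexHull ℝ (S : Set (Fin n → ℝ))) ∧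
    ∀ x ∈ twistedCube n c ℓ, gkRho n c ℓ x = 1

/-- The Cartier data `m_{σ,j}`, defined by downward recursion: `m_{σ,j} = 0` if
`σ_j = +` (here `false`), and `m_{σ,j} = ℓ_j - Σ_{k > j} c_{jk} m_{σ,k}` if
`σ_j = -` (here `true`). -/
def mSigma (n : ℕ) (c : ℕ → ℕ → ℤ) (ℓ : ℕ → ℤ) (σ : ℕ → Bool) (j : ℕ) : ℤ :=
  if σ j then
    ℓ j - ∑ k ∈ (Finset.Ico (j + 1) n).attach, c j (k : ℕ) * mSigma n c ℓ σ (k : ℕ)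
  else 0
termination_by n - j
decreasing_by
  have h := Finset.mem_Ico.mp k.2
  omega

section Aux
variable {r : ℕ} (Γ : SimpleGraph (Fin r))

lemma cartan_self (a : Fin r) : cartan Γ a a = 2 := by simp [cartan]

lemma cartan_pos_eq {a b : Fin r} (h : 0 < cartan Γ a b) : a = b := by
  by_contra hne
  simp only [cartan, if_neg hne] at h
  split_ifs at h <;> omega

lemma cartan_neg_edist {a b : Fin r} (h : cartan Γ a b < 0) : Γ.edist a b = 1 := by
  by_cases he : a = b
  · simp [cartan, he] at h
  · simp only [cartan, if_neg he] at h
    split_ifs at h with h1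
    · exact h1
    · omega

lemma cartan_comm (a b : Fin r) : cartan Γ a b = cartan Γ b a := by
  unfold cartan
  rw [SimpleGraph.edist_comm]
  by_cases h : a = b
  · simp [h]
  · simp [h, Ne.symm h]

lemma cartan_of_adj {a b : Fin r} (h : Γ.edist a b = 1) : cartan Γ a b = -1 := by
  have hne : a ≠ b := by
    intro he; rw [he, SimpleGraph.edist_self] at h; simp at h
  simp [cartan, hne, h]

lemma cartan_of_far {a b : Fin r} (hne : a ≠ b) (h : Γ.edist a b ≠ 1) :
    cartan Γ a b = 0 := by simp [cartan, hne, h]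

end Aux

section AfunLemmas
variable {n : ℕ} (c : ℕ → ℕ → ℤ) (ℓ : ℕ → ℤ)

lemma Afun_congr (j : ℕ) {x y : Fin n → ℝ} (h : ∀ k : Fin n, j < (k : ℕ) → x k = y k) :
    Afun n c ℓ j x = Afun n c ℓ j y := by
  unfold Afun
  congr 1
  refine Finset.sum_congr rfl fun k _ => ?_
  split_ifs with hj
  · rw [h k hj]
  · rfl

lemma Afun_comb (j : ℕ) (a b : ℝ) (hab : a + b = 1) (x y : Fin n → ℝ) :
    Afun n c ℓ j (fun k => a * x k + b * y k)
      = a * Afun n c ℓ j x + b * Afun n c ℓ j y := by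
  unfold Afun
  have h : ∀ k : Fin n,
      (if j < (k : ℕ) then (c j (k : ℕ) : ℝ) * (a * x k + b * y k) else 0)
        = a * (if j < (k : ℕ) then (c j (k : ℕ) : ℝ) * x k else 0)
          + b * (if j < (k : ℕ) then (c j (k : ℕ) : ℝ) * y k else 0) := by
    intro k; split_ifs <;> ring
  rw [Finset.sum_congr rfl fun k _ => h k, Finset.sum_add_distrib,
    ← Finset.mul_sum, ← Finset.mul_sum]
  linear_combination (-(ℓ j : ℝ)) * hab

lemma Afun_sum_comb (j : ℕ) {ι : Type*} (S : Finset ι) (w : ι → ℝ) (z : ι → Fin n → ℝ)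
    (hw : ∑ v ∈ S, w v = 1) :
    Afun n c ℓ j (fun k => ∑ v ∈ S, w v * z v k)
      = ∑ v ∈ S, w v * Afun n c ℓ j (z v) := by
  unfold Afun
  have h : ∀ k : Fin n,
      (if j < (k : ℕ) then (c j (k : ℕ) : ℝ) * (∑ v ∈ S, w v * z v k) else 0)
        = ∑ v ∈ S, w v * (if j < (k : ℕ) then (c j (k : ℕ) : ℝ) * z v k else 0) := by
    intro k
    split_ifs with hj
    · rw [Finset.mul_sum]
      exact Finset.sum_congr rfl fun v _ => by ring
    · simp
  rw [Finset.sum_congr rfl fun k _ => h k, Finset.sum_comm]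
  have : ∀ v ∈ S, w v * ((ℓ j : ℝ) - ∑ k : Fin n, if j < (k:ℕ) then (c j (k:ℕ) : ℝ) * z v k else 0)
      = w v * (ℓ j : ℝ) - ∑ k : Fin n, w v * (if j < (k:ℕ) then (c j (k:ℕ) : ℝ) * z v k else 0) := by
    intro v _
    rw [mul_sub, Finset.mul_sum]
  rw [Finset.sum_congr rfl this, Finset.sum_sub_distrib, ← Finset.sum_mul, hw, one_mul]

end AfunLemmas

section Chain

variable {r n : ℕ} (Γ : SimpleGraph (Fin r)) (i : ℕ → Fin r) (lam : Fin r → ℤ)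

/-- From a position `k > j` with `x k > 0`, walk up to a letter with positive `lam`. -/
lemma walkup (hlam : ∀ v, 0 ≤ lam v) (x : Fin n → ℝ) (j : ℕ)
    (hx : ∀ k : Fin n, j < (k : ℕ) →
      0 ≤ x k ∧ x k ≤ Afun n (fun p q => cartan Γ (i p) (i q)) (fun p => lam (i p)) (k : ℕ) x) :
    ∀ (d : ℕ) (k : Fin n), n - (k : ℕ) ≤ d → j < (k : ℕ) → 0 < x k →
    ∃ (p : ℕ) (g : ℕ → ℕ), 1 ≤ p ∧ StrictMono g ∧ g 0 = (k : ℕ) ∧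
      (∀ u, u < p → g u < n) ∧
      (∀ u, u + 1 < p → Γ.edist (i (g u)) (i (g (u + 1))) = 1) ∧
      0 < lam (i (g (p - 1))) := by
  intro d
  induction d with
  | zero => exact fun k hk _ _ => absurd k.isLt (by omega)
  | succ d ih =>
    intro k hkd hjk hxk
    by_cases hpos : 0 < lam (i (k : ℕ))
    · refine ⟨1, fun u => (k : ℕ) + u, le_refl 1, fun a b hab => ?_, by simp, fun u hu => ?_, fun u hu => by omega, by simpa using hpos⟩
      · show (k : ℕ) + a < (k : ℕ) + b; omega
      · show (k : ℕ) + u < n; have := k.isLt; omega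
    · have hlk : lam (i (k : ℕ)) = 0 := le_antisymm (by omega) (hlam _)
      have hxk2 := (hx k hjk).2
      have hA : 0 < Afun n (fun p q => cartan Γ (i p) (i q)) (fun p => lam (i p)) (k : ℕ) x :=
        lt_of_lt_of_le hxk hxk2
      unfold Afun at hA
      beta_reduce at hA
      rw [hlk] at hA
      have hsum : ∑ k' : Fin n,
          (if (k : ℕ) < (k' : ℕ) then (cartan Γ (i (k : ℕ)) (i (k' : ℕ)) : ℝ) * x k' else 0)
            < ∑ _k' : Fin n, (0 : ℝ) := by
        simpa using hA
      obtain ⟨k', -, hk'⟩ := Finset.exists_lt_of_sum_lt hsum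
      have hkk' : (k : ℕ) < (k' : ℕ) := by
        by_contra hcon
        rw [if_neg hcon] at hk'
        exact absurd hk' (by norm_num)
      rw [if_pos hkk'] at hk'
      have hxknn : 0 ≤ x k' := (hx k' (by omega)).1
      have hxk' : 0 < x k' := by
        rcases lt_or_eq_of_le hxknn with h | h
        · exact h
        · rw [← h, mul_zero] at hk'; exact absurd hk' (by norm_num)
      have hcneg : cartan Γ (i (k : ℕ)) (i (k' : ℕ)) < 0 := by
        by_contra hcon
        push_neg at hcon
        have : (0 : ℝ) ≤ (cartan Γ (i (k : ℕ)) (i (k' : ℕ)) : ℝ) * x k' :=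
          mul_nonneg (by exact_mod_cast hcon) (le_of_lt hxk')
        linarith
      have hedist := cartan_neg_edist Γ hcneg
      obtain ⟨p, g, hp, hg, hg0, hgb, hge, hgl⟩ :=
        ih k' (by omega) (by omega) hxk'
      refine ⟨p + 1, fun u => if u = 0 then (k : ℕ) else g (u - 1), by omega, ?_, by simp, ?_, ?_, ?_⟩
      · apply strictMono_nat_of_lt_succ
        intro u
        cases u with
        | zero => simpa [hg0] using hkk'
        | succ u => simpa using hg (by omega : u < u + 1)
      · intro u hu
        cases u with
        | zero => simpa using (lt_of_le_of_lt (le_refl _) k.isLt)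
        | succ u => simpa using hgb u (by omega)
      · intro u hu
        cases u with
        | zero => simpa [hg0] using hedist
        | succ u =>
          have := hge u (by omega)
          simpa using this
      · have hp1 : p + 1 - 1 = p := by omega
        rw [hp1]
        have : p ≠ 0 := by omega
        simp only [this, if_neg]
        simpa [this] using hgl

end Chain

section Key

variable {r n : ℕ} (Γ : SimpleGraph (Fin r)) (i : ℕ → Fin r) (lam : Fin r → ℤ)

/-- KEY: under walk-avoidance, `A_j(x) ≥ 0` whenever the constraints hold above `j`. -/
lemma Afun_nonneg_of_avoiding (hlam : ∀ v, 0 ≤ lam v)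
    (hav : IsHLamWalkAvoiding Γ n i lam) (j : ℕ) (hjn : j < n) (x : Fin n → ℝ)
    (hx : ∀ k : Fin n, j < (k : ℕ) →
      0 ≤ x k ∧ x k ≤ Afun n (fun p q => cartan Γ (i p) (i q)) (fun p => lam (i p)) (k : ℕ) x) :
    0 ≤ Afun n (fun p q => cartan Γ (i p) (i q)) (fun p => lam (i p)) j x := by
  by_contra hneg
  push_neg at hneg
  unfold Afun at hneg
  beta_reduce at hneg
  have hljnn : (0 : ℝ) ≤ (lam (i j) : ℤ) := by exact_mod_cast hlam (i j)
  have hsum : ∑ _k : Fin n, (0 : ℝ)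
      < ∑ k : Fin n, (if j < (k : ℕ) then (cartan Γ (i j) (i (k : ℕ)) : ℝ) * x k else 0) := by
    push_cast at hneg ⊢
    simp only [Finset.sum_const_zero]
    linarith
  obtain ⟨k, -, hk⟩ := Finset.exists_lt_of_sum_lt hsum
  have hjk : j < (k : ℕ) := by
    by_contra hcon
    rw [if_neg hcon] at hk
    exact absurd hk (by norm_num)
  rw [if_pos hjk] at hk
  have hxknn : 0 ≤ x k := (hx k hjk).1
  have hxk : 0 < x k := by
    rcases lt_or_eq_of_le hxknn with h | h
    · exact h
    · rw [← h, mul_zero] at hk; exact absurd hk (by norm_num)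
  have hcpos : 0 < cartan Γ (i j) (i (k : ℕ)) := by
    by_contra hcon
    push_neg at hcon
    have : (cartan Γ (i j) (i (k : ℕ)) : ℝ) * x k ≤ 0 :=
      mul_nonpos_of_nonpos_of_nonneg (by exact_mod_cast hcon) hxknn
    linarith
  have heq : i j = i (k : ℕ) := cartan_pos_eq Γ hcpos
  obtain ⟨p, g, hp, hg, hg0, hgb, hge, hgl⟩ :=
    walkup Γ i lam hlam x j hx (n - (k : ℕ)) k (le_refl _) hjk hxk
  apply hav
  refine ⟨p + 1, fun t => if t = 0 then j else g (t - 1), ?_, ?_, by omega, ?_, ?_, ?_⟩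
  · apply strictMono_nat_of_lt_succ
    intro u
    cases u with
    | zero => simpa [hg0] using hjk
    | succ u => simpa using hg (by omega : u < u + 1)
  · intro t ht
    cases t with
    | zero => simpa using hjn
    | succ t => simpa using hgb t (by omega)
  · show i j = i (g 0)
    rw [hg0]; exact heq
  · intro u hu
    have h1 : p + 1 - 1 = p := by omega
    rw [h1] at hu
    cases u with
    | zero =>
      show Γ.edist (i (g 0)) (i (g 1)) = 1
      exact hge 0 (by omega)
    | succ u =>
      show Γ.edist (i (g (u + 1))) (i (g (u + 2))) = 1
      exact hge (u + 1) (by omega)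
  · have h1 : p + 1 - 1 = p := by omega
    rw [h1]
    have hpne : p ≠ 0 := by omega
    simpa [hpne] using hgl

end Key

section Polytope

/-- The partial positive region: coordinates `≥ j` satisfy the box constraints,
coordinates `< j` are frozen to `0`. -/
def Qset (n : ℕ) (c : ℕ → ℕ → ℤ) (ℓ : ℕ → ℤ) (j : ℕ) : Set (Fin n → ℝ) :=
  {x | (∀ k : Fin n, j ≤ (k : ℕ) → 0 ≤ x k ∧ x k ≤ Afun n c ℓ (k : ℕ) x) ∧
       (∀ k : Fin n, (k : ℕ) < j → x k = 0)}

variable {n : ℕ} (c : ℕ → ℕ → ℤ) (ℓ : ℕ → ℤ)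

lemma convex_Qset (j : ℕ) : Convex ℝ (Qset n c ℓ j) := by
  intro x hx y hy a b ha hb hab
  have hcomb : ∀ k : Fin n, (a • x + b • y) k = a * x k + b * y k := by
    intro k; simp [smul_eq_mul]
  constructor
  · intro k hk
    have hAx := (hx.1 k hk)
    have hAy := (hy.1 k hk)
    constructor
    · rw [hcomb k]
      exact add_nonneg (mul_nonneg ha hAx.1) (mul_nonneg hb hAy.1)
    · rw [hcomb k]
      have : Afun n c ℓ (k : ℕ) (a • x + b • y) = a * Afun n c ℓ (k : ℕ) x + b * Afun n c ℓ (k : ℕ) y := by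
        rw [show (a • x + b • y) = (fun k' => a * x k' + b * y k') from funext hcomb]
        exact Afun_comb c ℓ (k : ℕ) a b hab x y
      rw [this]
      exact add_le_add (mul_le_mul_of_nonneg_left hAx.2 ha)
        (mul_le_mul_of_nonneg_left hAy.2 hb)
  · intro k hk
    rw [hcomb k, hx.2 k hk, hy.2 k hk]
    ring

lemma closed_Qset (j : ℕ) : IsClosed (Qset n c ℓ j) := by
  have h1 : Qset n c ℓ j =
      (⋂ k : Fin n, {x : Fin n → ℝ | j ≤ (k : ℕ) → (0 ≤ x k ∧ x k ≤ Afun n c ℓ (k : ℕ) x)}) ∩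
      (⋂ k : Fin n, {x : Fin n → ℝ | (k : ℕ) < j → x k = 0}) := by
    ext x
    simp only [Qset, Set.mem_inter_iff, Set.mem_iInter, Set.mem_setOf_eq]
  rw [h1]
  have hAcont : ∀ k : ℕ, Continuous (fun x : Fin n → ℝ => Afun n c ℓ k x) := by
    intro k
    unfold Afun
    apply Continuous.sub continuous_const
    apply continuous_finset_sum
    intro k' _
    by_cases h : k < (k' : ℕ)
    · simp only [if_pos h]
      exact continuous_const.mul (continuous_apply k')
    · simp only [if_neg h]
      exact continuous_const
  apply IsClosed.inter
  · apply isClosed_iInter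
    intro k
    by_cases h : j ≤ (k : ℕ)
    · have : {x : Fin n → ℝ | j ≤ (k:ℕ) → (0 ≤ x k ∧ x k ≤ Afun n c ℓ (k : ℕ) x)}
          = {x : Fin n → ℝ | 0 ≤ x k} ∩ {x : Fin n → ℝ | x k ≤ Afun n c ℓ (k : ℕ) x} := by
        ext x; simp [h, Set.mem_setOf_eq]
      rw [this]
      exact (isClosed_le continuous_const (continuous_apply k)).inter
        (isClosed_le (continuous_apply k) (hAcont (k : ℕ)))
    · have : {x : Fin n → ℝ | j ≤ (k:ℕ) → (0 ≤ x k ∧ x k ≤ Afun n c ℓ (k : ℕ) x)} = Set.univ := by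
        ext x; simp [h]
      rw [this]; exact isClosed_univ
  · apply isClosed_iInter
    intro k
    by_cases h : (k : ℕ) < j
    · have : {x : Fin n → ℝ | (k:ℕ) < j → x k = 0} = {x : Fin n → ℝ | x k = 0} := by
        ext x; simp [h]
      rw [this]
      exact isClosed_eq (continuous_apply k) continuous_const
    · have : {x : Fin n → ℝ | (k:ℕ) < j → x k = 0} = Set.univ := by
        ext x; simp [h]
      rw [this]; exact isClosed_univ

end Polytope

section Hull

variable {r n : ℕ} (Γ : SimpleGraph (Fin r)) (i : ℕ → Fin r) (lam : Fin r → ℤ)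

lemma Qset_hull (hlam : ∀ v, 0 ≤ lam v) (hav : IsHLamWalkAvoiding Γ n i lam) :
    ∀ (t j : ℕ), j + t = n →
      ∃ S : Finset (Fin n → ℝ),
        Qset n (fun p q => cartan Γ (i p) (i q)) (fun p => lam (i p)) j
          = convexHull ℝ (S : Set (Fin n → ℝ)) := by
  set c : ℕ → ℕ → ℤ := fun p q => cartan Γ (i p) (i q) with hc
  set ℓ : ℕ → ℤ := fun p => lam (i p) with hℓ
  intro t
  induction t with
  | zero =>
    intro j hj
    refine ⟨{0}, ?_⟩
    have hQ : Qset n c ℓ j = {(0 : Fin n → ℝ)} := by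
      ext x
      constructor
      · rintro ⟨-, h2⟩
        have hx0 : x = 0 := funext fun k => h2 k (by have := k.isLt; omega)
        exact Set.mem_singleton_iff.mpr hx0
      · intro hx
        rw [Set.mem_singleton_iff] at hx
        subst hx
        exact ⟨fun k hk => absurd k.isLt (by omega), fun k _ => rfl⟩
    rw [hQ, Finset.coe_singleton, convexHull_singleton]
  | succ t ih =>
    intro j hj
    obtain ⟨S', hS'⟩ := ih (j + 1) (by omega)
    have hjn : j < n := by omega
    set jF : Fin n := ⟨j, hjn⟩ with hjF
    have hA0 : ∀ v ∈ Qset n c ℓ (j + 1), 0 ≤ Afun n c ℓ j v := by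
      intro v hv
      exact Afun_nonneg_of_avoiding Γ i lam hlam hav j hjn v
        (fun k hk => hv.1 k (by omega))
    set u0 : (Fin n → ℝ) → (Fin n → ℝ) := fun v => Function.update v jF 0 with hu0
    set u1 : (Fin n → ℝ) → (Fin n → ℝ) := fun v => Function.update v jF (Afun n c ℓ j v) with hu1
    refine ⟨S'.image u0 ∪ S'.image u1, ?_⟩
    have hne : ∀ k : Fin n, j < (k : ℕ) → k ≠ jF := by
      intro k hk hkj
      rw [hkj] at hk
      simp [hjF] at hk
    have hupdA : ∀ (v : Fin n → ℝ) (w : ℝ) (k : ℕ), j ≤ k →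
        Afun n c ℓ k (Function.update v jF w) = Afun n c ℓ k v := by
      intro v w k hk
      apply Afun_congr
      intro k' hk'
      exact Function.update_of_ne (hne k' (by omega)) _ _
    have hupd_mem : ∀ v ∈ Qset n c ℓ (j + 1), ∀ w : ℝ, 0 ≤ w → w ≤ Afun n c ℓ j v →
        Function.update v jF w ∈ Qset n c ℓ j := by
      intro v hv w hw0 hw1
      constructor
      · intro k hk
        by_cases hkj : k = jF
        · subst hkj
          rw [Function.update_self]
          have : (jF : ℕ) = j := rfl
          rw [this, hupdA v w j (le_refl j)]
          exact ⟨hw0, hw1⟩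
        · have hk1 : j + 1 ≤ (k : ℕ) := by
            rcases Nat.lt_or_ge (j) (k : ℕ) with h | h
            · omega
            · have : (k : ℕ) = j := by omega
              exact absurd (Fin.ext this : k = jF) hkj
          rw [Function.update_of_ne hkj, hupdA v w (k : ℕ) (by omega)]
          exact hv.1 k hk1
      · intro k hk
        have hkj : k ≠ jF := by
          intro h; rw [h] at hk; simp [hjF] at hk
        rw [Function.update_of_ne hkj]
        exact hv.2 k (by omega)
    apply Set.Subset.antisymm
    · -- Qset j ⊆ hull S
      intro x hx
      set y : Fin n → ℝ := Function.update x jF 0 with hy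
      have hymem : y ∈ Qset n c ℓ (j + 1) := by
        constructor
        · intro k hk
          have hkj : k ≠ jF := hne k (by omega)
          rw [hy, Function.update_of_ne hkj, hupdA x 0 (k : ℕ) (by omega)]
          exact hx.1 k (by omega)
        · intro k hk
          by_cases hkj : k = jF
          · rw [hy, hkj, Function.update_self]
          · rw [hy, Function.update_of_ne hkj]
            have : (k : ℕ) < j := by
              rcases Nat.lt_or_ge (k : ℕ) j with h | h
              · exact h
              · have : (k : ℕ) = j := by omega
                exact absurd (Fin.ext this : k = jF) hkj
            exact hx.2 k this
      rw [hS', Finset.convexHull_eq] at hymem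
      obtain ⟨w, hw0, hw1, hwc⟩ := hymem
      have hyc : ∀ k : Fin n, y k = ∑ v ∈ S', w v * v k := by
        intro k
        rw [← hwc, Finset.centerMass_eq_of_sum_1 _ id hw1]
        simp [Finset.sum_apply]
      set α : ℝ := Afun n c ℓ j x with hα
      have hxj : 0 ≤ x jF ∧ x jF ≤ α := by
        have := hx.1 jF (le_refl j)
        exact this
      have hα0 : 0 ≤ α := le_trans hxj.1 hxj.2
      have hαy : Afun n c ℓ j y = α := by
        rw [hy, hupdA x 0 j (le_refl j)]
      have hαsum : ∑ v ∈ S', w v * Afun n c ℓ j v = α := by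
        have h1 : (fun k => ∑ v ∈ S', w v * v k) = y := funext fun k => (hyc k).symm
        rw [← Afun_sum_comb c ℓ j S' w (fun v => v) hw1]
        rw [show (fun k => ∑ v ∈ S', w v * (fun v => v) v k) = y from h1]
        exact hαy
      set s : ℝ := if α = 0 then 0 else x jF / α with hs
      have hs0 : 0 ≤ s := by
        rw [hs]; split_ifs with h
        · exact le_refl 0
        · exact div_nonneg hxj.1 hα0
      have hs1 : s ≤ 1 := by
        rw [hs]; split_ifs with h
        · norm_num
        · exact div_le_one_of_le₀ hxj.2 hα0
      have hsα : s * α = x jF := by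
        rw [hs]; split_ifs with h
        · rw [h] at hxj ⊢
          have : x jF = 0 := le_antisymm hxj.2 hxj.1
          rw [this]; ring
        · field_simp
      set z0 : Fin n → ℝ := S'.centerMass w u0 with hz0
      set z1 : Fin n → ℝ := S'.centerMass w u1 with hz1
      have hz0mem : z0 ∈ convexHull ℝ ((S'.image u0 ∪ S'.image u1 : Finset (Fin n → ℝ)) : Set (Fin n → ℝ)) := by
        apply Finset.centerMass_mem_convexHull S' hw0 (by rw [hw1]; norm_num)
        intro v hv
        simp only [Finset.coe_union, Set.mem_union, Finset.mem_coe, Finset.mem_image]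
        exact Or.inl ⟨v, hv, rfl⟩
      have hz1mem : z1 ∈ convexHull ℝ ((S'.image u0 ∪ S'.image u1 : Finset (Fin n → ℝ)) : Set (Fin n → ℝ)) := by
        apply Finset.centerMass_mem_convexHull S' hw0 (by rw [hw1]; norm_num)
        intro v hv
        simp only [Finset.coe_union, Set.mem_union, Finset.mem_coe, Finset.mem_image]
        exact Or.inr ⟨v, hv, rfl⟩
      have hz0c : ∀ k : Fin n, z0 k = ∑ v ∈ S', w v * (u0 v k) := by
        intro k
        rw [hz0, Finset.centerMass_eq_of_sum_1 _ u0 hw1]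
        simp [Finset.sum_apply]
      have hz1c : ∀ k : Fin n, z1 k = ∑ v ∈ S', w v * (u1 v k) := by
        intro k
        rw [hz1, Finset.centerMass_eq_of_sum_1 _ u1 hw1]
        simp [Finset.sum_apply]
      have hx_eq : x = (1 - s) • z0 + s • z1 := by
        funext k
        have hrhs : ((1 - s) • z0 + s • z1) k = (1 - s) * z0 k + s * z1 k := by
          simp [smul_eq_mul]
        rw [hrhs]
        by_cases hkj : k = jF
        · subst hkj
          have h0 : z0 jF = 0 := by
            rw [hz0c jF]
            apply Finset.sum_eq_zero
            intro v hv
            rw [hu0]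
            simp [Function.update_self]
          have h1 : z1 jF = α := by
            rw [hz1c jF]
            have : ∀ v ∈ S', w v * (u1 v jF) = w v * Afun n c ℓ j v := by
              intro v hv
              rw [hu1]
              simp [Function.update_self]
            rw [Finset.sum_congr rfl this, hαsum]
          rw [h0, h1, mul_zero, zero_add, hsα]
        · have h0 : z0 k = y k := by
            rw [hz0c k, hyc k]
            apply Finset.sum_congr rfl
            intro v hv
            rw [hu0]
            simp [Function.update_of_ne hkj]
          have h1 : z1 k = y k := by
            rw [hz1c k, hyc k]
            apply Finset.sum_congr rfl
            intro v hv
            rw [hu1]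
            simp [Function.update_of_ne hkj]
          have hyk : y k = x k := by
            rw [hy, Function.update_of_ne hkj]
          rw [h0, h1, hyk]
          ring
      rw [hx_eq]
      exact (convex_convexHull ℝ _) hz0mem hz1mem (by linarith) hs0 (by ring)
    · -- hull S ⊆ Qset j
      apply convexHull_min
      · intro z hz
        simp only [Finset.coe_union, Set.mem_union, Finset.mem_coe, Finset.mem_image] at hz
        have hmem : ∀ v ∈ S', v ∈ Qset n c ℓ (j + 1) := by
          intro v hv
          rw [hS']
          exact subset_convexHull ℝ _ (Finset.mem_coe.mpr hv)
        rcases hz with ⟨v, hv, rfl⟩ | ⟨v, hv, rfl⟩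
        · exact hupd_mem v (hmem v hv) 0 (le_refl 0) (hA0 v (hmem v hv))
        · exact hupd_mem v (hmem v hv) (Afun n c ℓ j v) (hA0 v (hmem v hv)) (le_refl _)
      · exact convex_Qset c ℓ j

end Hull

section Backward

variable {r n : ℕ} (Γ : SimpleGraph (Fin r)) (i : ℕ → Fin r) (lam : Fin r → ℤ)

lemma cube_eq_Qset (hlam : ∀ v, 0 ≤ lam v) (hav : IsHLamWalkAvoiding Γ n i lam) :
    twistedCube n (fun p q => cartan Γ (i p) (i q)) (fun p => lam (i p))
      = Qset n (fun p q => cartan Γ (i p) (i q)) (fun p => lam (i p)) 0 := by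
  set c : ℕ → ℕ → ℤ := fun p q => cartan Γ (i p) (i q) with hc
  set ℓ : ℕ → ℤ := fun p => lam (i p) with hℓ
  apply Set.Subset.antisymm
  · intro x hx
    have hnn : ∀ (d : ℕ) (k : Fin n), n - (k : ℕ) ≤ d → 0 ≤ x k := by
      intro d
      induction d with
      | zero => exact fun k hk => absurd k.isLt (by omega)
      | succ d ih =>
        intro k hk
        rcases hx k with ⟨hA, hneg⟩ | ⟨h0, -⟩
        · exfalso
          have hAnn : 0 ≤ Afun n c ℓ (k : ℕ) x := by
            apply Afun_nonneg_of_avoiding Γ i lam hlam hav (k : ℕ) k.isLt x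
            intro k' hk'
            have h0k' : 0 ≤ x k' := ih k' (by omega)
            rcases hx k' with ⟨-, hneg'⟩ | hok
            · exact absurd hneg' (by linarith)
            · exact hok
          linarith
        · exact h0
    constructor
    · intro k _
      have h0 : 0 ≤ x k := hnn n k (by omega)
      rcases hx k with ⟨-, hneg⟩ | hok
      · exact absurd hneg (by linarith)
      · exact hok
    · intro k hk
      exact absurd hk (by omega)
  · intro x hx
    intro k
    exact Or.inr (hx.1 k (Nat.zero_le _))

lemma avoiding_imp_untwisted (hlam : ∀ v, 0 ≤ lam v)
    (hav : IsHLamWalkAvoiding Γ n i lam) :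
    IsUntwisted n (fun p q => cartan Γ (i p) (i q)) (fun p => lam (i p)) := by
  set c : ℕ → ℕ → ℤ := fun p q => cartan Γ (i p) (i q) with hc
  set ℓ : ℕ → ℤ := fun p => lam (i p) with hℓ
  have hCQ := cube_eq_Qset Γ i lam hlam hav
  refine ⟨?_, ?_, ?_, ?_⟩
  · rw [hCQ]; exact closed_Qset c ℓ 0
  · rw [hCQ]; exact convex_Qset c ℓ 0
  · obtain ⟨S, hS⟩ := Qset_hull Γ i lam hlam hav n 0 (by omega)
    exact ⟨S, by rw [hCQ]; exact hS⟩
  · intro x hx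
    have hnn : ∀ k : Fin n, 0 ≤ x k := by
      have hxQ : x ∈ Qset n c ℓ 0 := by rw [← hCQ]; exact hx
      exact fun k => (hxQ.1 k (Nat.zero_le _)).1
    unfold gkRho
    rw [if_pos hx]
    have hprod : ∏ k : Fin n, gkSgn (x k) = (-1 : ℝ) ^ n := by
      have : ∀ k : Fin n, gkSgn (x k) = -1 := by
        intro k
        unfold gkSgn
        rw [if_neg (by linarith [hnn k] : ¬ x k < 0)]
      rw [Finset.prod_congr rfl fun k _ => this k]
      simp
    rw [hprod, ← mul_pow]
    norm_num

end Backward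

section Tree

variable {r : ℕ} {Γ : SimpleGraph (Fin r)} (v : ℕ → Fin r)

/-- A walk along consecutive vertices `v p, v (p+1), …, v (p+d)`. -/
def chainWalk (Γ : SimpleGraph (Fin r)) (v : ℕ → Fin r) :
    ∀ (d p : ℕ), (∀ t, p ≤ t → t < p + d → Γ.Adj (v t) (v (t + 1))) → Γ.Walk (v p) (v (p + d))
  | 0, p, _ => SimpleGraph.Walk.nil.copy rfl (by rw [Nat.add_zero])
  | (d + 1), p, h =>
    SimpleGraph.Walk.cons (h p (le_refl p) (by omega))
      ((chainWalk Γ v d (p + 1) (fun t ht1 ht2 => h t (by omega) (by omega))).copy rfl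
        (congrArg v (by omega : p + 1 + d = p + (d + 1))))

lemma chainWalk_length : ∀ (d p : ℕ) (h), (chainWalk Γ v d p h).length = d := by
  intro d
  induction d with
  | zero =>
    intro p h
    rw [chainWalk]
    simp
  | succ d ih =>
    intro p h
    rw [chainWalk]
    simp [ih]

lemma chainWalk_support : ∀ (d p : ℕ) (h),
    (chainWalk Γ v d p h).support = (List.range (d + 1)).map (fun u => v (p + u)) := by
  intro d
  induction d with
  | zero =>
    intro p h
    rw [chainWalk]
    simp [List.range_succ]
  | succ d ih =>
    intro p h
    rw [chainWalk]
    simp only [SimpleGraph.Walk.support_cons, SimpleGraph.Walk.support_copy, ih]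
    conv_rhs => rw [List.range_succ_eq_map]
    simp only [List.map_cons, List.map_map]
    refine congrArg₂ List.cons (by rw [Nat.add_zero]) ?_
    apply List.map_congr_left
    intro u hu
    simp only [Function.comp_apply]
    congr 1
    omega

lemma chainWalk_isPath (d p : ℕ) (h)
    (hdist : ∀ s t, p ≤ s → s < t → t ≤ p + d → v s ≠ v t) :
    (chainWalk Γ v d p h).IsPath := by
  rw [SimpleGraph.Walk.isPath_def, chainWalk_support]
  apply List.Nodup.map_on
  · intro s hs t ht hst
    rw [List.mem_range] at hs ht
    by_contra hne
    rcases Nat.lt_or_ge s t with hlt | hge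
    · exact hdist (p + s) (p + t) (by omega) (by omega) (by omega) hst
    · have : t < s := by omega
      exact hdist (p + t) (p + s) (by omega) (by omega) (by omega) hst.symm
  · exact List.nodup_range

lemma no_shortcut (hΓ : Γ.IsAcyclic) (p d : ℕ) (hd : 2 ≤ d)
    (hadj : ∀ t, p ≤ t → t < p + d → Γ.Adj (v t) (v (t + 1)))
    (hdist : ∀ s t, p ≤ s → s < t → t ≤ p + d → v s ≠ v t) :
    ¬ Γ.Adj (v p) (v (p + d)) := by
  intro hA
  have hpq := SimpleGraph.isAcyclic_iff_path_unique.mp hΓ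
    ⟨chainWalk Γ v d p hadj, chainWalk_isPath v d p hadj hdist⟩
    (SimpleGraph.Path.singleton hA)
  have hlen := congrArg (fun P : Γ.Path (v p) (v (p + d)) => P.1.length) hpq
  simp only [SimpleGraph.Path.singleton, chainWalk_length, SimpleGraph.Walk.length_cons,
    SimpleGraph.Walk.length_nil] at hlen
  omega

lemma no_fork (hΓ : Γ.IsAcyclic) (p d : ℕ) (hd : 1 ≤ d)
    (hadj : ∀ t, p ≤ t → t < p + d → Γ.Adj (v t) (v (t + 1)))
    (hdist : ∀ s t, p ≤ s → s < t → t ≤ p + d → v s ≠ v t)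
    (u : Fin r) (hu : ∀ t, p ≤ t → t ≤ p + d → u ≠ v t)
    (h1 : Γ.Adj u (v p)) (h2 : Γ.Adj u (v (p + d))) : False := by
  have hP1path : (SimpleGraph.Walk.cons h1 (chainWalk Γ v d p hadj)).IsPath := by
    rw [SimpleGraph.Walk.cons_isPath_iff]
    refine ⟨chainWalk_isPath v d p hadj hdist, ?_⟩
    rw [SimpleGraph.Walk.mem_support_iff_exists_append]
    intro ⟨w1, w2, hw⟩
    have : u ∈ (chainWalk Γ v d p hadj).support := by
      rw [hw]; simp [SimpleGraph.Walk.mem_support_append_iff]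
    rw [chainWalk_support] at this
    simp only [List.mem_map, List.mem_range] at this
    obtain ⟨s, hs, hvs⟩ := this
    exact hu (p + s) (by omega) (by omega) hvs.symm
  have hpq := SimpleGraph.isAcyclic_iff_path_unique.mp hΓ
    ⟨SimpleGraph.Walk.cons h1 (chainWalk Γ v d p hadj), hP1path⟩
    (SimpleGraph.Path.singleton h2)
  have hlen := congrArg (fun P : Γ.Path u (v (p + d)) => P.1.length) hpq
  simp only [SimpleGraph.Path.singleton, SimpleGraph.Walk.length_cons, chainWalk_length,
    SimpleGraph.Walk.length_nil] at hlen
  omega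

end Tree

section Normalize

variable {r n : ℕ} {Γ : SimpleGraph (Fin r)} {i : ℕ → Fin r} {lam : Fin r → ℤ}

/-- From any hesitant λ-walk subword, get one whose tail letters are pairwise distinct. -/
lemma distinctify :
    ∀ m : ℕ, ∀ j : ℕ → ℕ, StrictMono j → (∀ t, t < m → j t < n) →
      IsHesitantLamWalk Γ m (fun t => i (j t)) lam →
      ∃ (m' : ℕ) (j' : ℕ → ℕ), StrictMono j' ∧ (∀ t, t < m' → j' t < n) ∧
        IsHesitantLamWalk Γ m' (fun t => i (j' t)) lam ∧
        (∀ s t, 1 ≤ s → s < t → t ≤ m' - 1 → i (j' s) ≠ i (j' t)) := by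
  intro m
  induction m using Nat.strong_induction_on with
  | _ m ih =>
    intro j hmono hb hw
    by_cases hdst : ∀ s t, 1 ≤ s → s < t → t ≤ m - 1 → i (j s) ≠ i (j t)
    · exact ⟨m, j, hmono, hb, hw, hdst⟩
    · push_neg at hdst
      obtain ⟨s, t, hs1, hst, htm, heq⟩ := hdst
      obtain ⟨hm2, -, hdiag, hend⟩ := hw
      set m' : ℕ := m - t + 1 with hm'
      set j' : ℕ → ℕ := fun u => if u = 0 then j s else j (u + t - 1) with hj'
      have hm'lt : m' < m := by omega
      have hmono' : StrictMono j' := by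
        apply strictMono_nat_of_lt_succ
        intro u
        cases u with
        | zero =>
          show j s < j (1 + t - 1)
          have : 1 + t - 1 = t := by omega
          rw [this]
          exact hmono hst
        | succ u =>
          show j (u + 1 + t - 1) < j (u + 2 + t - 1)
          exact hmono (by omega)
      have hb' : ∀ u, u < m' → j' u < n := by
        intro u hu
        cases u with
        | zero => exact hb s (by omega)
        | succ u =>
          show j (u + 1 + t - 1) < n
          exact hb _ (by omega)
      have hw' : IsHesitantLamWalk Γ m' (fun u => i (j' u)) lam := by
        refine ⟨by omega, ?_, ?_, ?_⟩
        · show i (j' 0) = i (j' 1)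
          show i (j s) = i (j (1 + t - 1))
          have : 1 + t - 1 = t := by omega
          rw [this]
          exact heq
        · intro u hu
          show Γ.edist (i (j' (u + 1))) (i (j' (u + 2))) = 1
          show Γ.edist (i (j (u + 1 + t - 1))) (i (j (u + 2 + t - 1))) = 1
          have h1 : u + 1 + t - 1 = (u + t - 1) + 1 := by omega
          have h2 : u + 2 + t - 1 = (u + t - 1) + 2 := by omega
          rw [h1, h2]
          exact hdiag (u + t - 1) (by omega)
        · show 0 < lam (i (j' (m' - 1)))
          have h0 : m' - 1 ≠ 0 := by omega
          have : j' (m' - 1) = j (m' - 1 + t - 1) := by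
            simp only [hj', if_neg h0]
          rw [this]
          have : m' - 1 + t - 1 = m - 1 := by omega
          rw [this]
          exact hend
      exact ih m' hm'lt j' hmono' hb' hw'

/-- Full normalization: distinct tail plus maximality of the hesitation index `j 0`. -/
lemma normalized_walk
    (h : ∃ (m : ℕ) (j : ℕ → ℕ), StrictMono j ∧ (∀ t, t < m → j t < n) ∧
        IsHesitantLamWalk Γ m (fun t => i (j t)) lam) :
    ∃ (m : ℕ) (j : ℕ → ℕ), 2 ≤ m ∧ StrictMono j ∧ (∀ t, t < m → j t < n) ∧
      i (j 0) = i (j 1) ∧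
      (∀ t, 1 ≤ t → t + 1 ≤ m - 1 → Γ.edist (i (j t)) (i (j (t + 1))) = 1) ∧
      0 < lam (i (j (m - 1))) ∧
      (∀ s t, 1 ≤ s → s < t → t ≤ m - 1 → i (j s) ≠ i (j t)) ∧
      (∀ k, j 0 < k → k < j 1 → i k ≠ i (j 0)) := by
  obtain ⟨m0, j0, hmono0, hb0, hw0⟩ := h
  obtain ⟨m, j, hmono, hb, hw, hdst⟩ := distinctify m0 j0 hmono0 hb0 hw0
  obtain ⟨hm2, heq, hdiag, hend⟩ := hw
  classical
  set K : Finset ℕ := (Finset.range (j 1)).filter (fun k => i k = i (j 1)) with hK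
  have hKne : (j 0) ∈ K := by
    rw [hK, Finset.mem_filter, Finset.mem_range]
    exact ⟨hmono (by omega : (0:ℕ) < 1), heq⟩
  set p : ℕ := K.max' ⟨j 0, hKne⟩ with hp
  have hpK : p ∈ K := K.max'_mem _
  rw [hK, Finset.mem_filter, Finset.mem_range] at hpK
  set j' : ℕ → ℕ := fun u => if u = 0 then p else j u with hj'
  have hj'0 : j' 0 = p := rfl
  have hj'succ : ∀ u, 1 ≤ u → j' u = j u := by
    intro u hu
    simp only [hj', if_neg (by omega : u ≠ 0)]
  refine ⟨m, j', hm2, ?_, ?_, ?_, ?_, ?_, ?_, ?_⟩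
  · apply strictMono_nat_of_lt_succ
    intro u
    cases u with
    | zero => rw [hj'0, hj'succ 1 (le_refl 1)]; exact hpK.1
    | succ u => rw [hj'succ (u+1) (by omega), hj'succ (u+2) (by omega)]; exact hmono (by omega)
  · intro t ht
    cases t with
    | zero =>
      rw [hj'0]
      exact lt_trans hpK.1 (hb 1 (by omega))
    | succ t => rw [hj'succ (t+1) (by omega)]; exact hb _ ht
  · rw [hj'0, hj'succ 1 (le_refl 1)]
    exact hpK.2
  · intro t ht1 ht2
    rw [hj'succ t ht1, hj'succ (t+1) (by omega)]
    have h := hdiag (t - 1) (by omega)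
    have h' : Γ.edist (i (j (t - 1 + 1))) (i (j (t - 1 + 1 + 1))) = 1 := h
    rw [show t - 1 + 1 = t from by omega] at h'
    exact h'
  · rw [hj'succ (m-1) (by omega)]
    exact hend
  · intro s t hs hst htm
    rw [hj'succ s hs, hj'succ t (by omega)]
    exact hdst s t hs hst htm
  · intro k hk1 hk2
    rw [hj'0] at hk1
    rw [hj'succ 1 (le_refl 1)] at hk2
    rw [hj'0, hpK.2]
    intro hcon
    have hkK : k ∈ K := by
      rw [hK, Finset.mem_filter, Finset.mem_range]
      exact ⟨hk2, hcon⟩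
    have := Finset.le_max' K k hkK
    omega

end Normalize

section GsumSec

variable {r : ℕ}

/-- The weighted cartan sum `G u T = Σ_{t ∈ [T, m)} c̄(u, i_{j_t}) · val_t`. -/
noncomputable def Gsum (Γ : SimpleGraph (Fin r)) (i : ℕ → Fin r) (j : ℕ → ℕ) (m : ℕ) (val : ℕ → ℝ)
    (u : Fin r) (T : ℕ) : ℝ :=
  ∑ t ∈ Finset.Ico T m, (cartan Γ u (i (j t)) : ℝ) * val t

variable (Γ : SimpleGraph (Fin r)) (i : ℕ → Fin r) (j : ℕ → ℕ) (m : ℕ) (val : ℕ → ℝ)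

lemma Gsum_of_ge (u : Fin r) (T : ℕ) (h : m ≤ T) : Gsum Γ i j m val u T = 0 := by
  unfold Gsum
  rw [Finset.Ico_eq_empty (by omega)]
  exact Finset.sum_empty

lemma Gsum_split (u : Fin r) (T : ℕ) (h : T < m) :
    Gsum Γ i j m val u T = (cartan Γ u (i (j T)) : ℝ) * val T + Gsum Γ i j m val u (T + 1) := by
  unfold Gsum
  exact Finset.sum_eq_sum_Ico_succ_bot h _

lemma Gsum_skip (u : Fin r) (T T' : ℕ) (h1 : T ≤ T') (h2 : T' ≤ m)
    (hz : ∀ t, T ≤ t → t < T' → cartan Γ u (i (j t)) = 0) :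
    Gsum Γ i j m val u T = Gsum Γ i j m val u T' := by
  unfold Gsum
  rw [← Finset.sum_Ico_consecutive _ h1 h2]
  have : ∑ t ∈ Finset.Ico T T', (cartan Γ u (i (j t)) : ℝ) * val t = 0 := by
    apply Finset.sum_eq_zero
    intro t ht
    rw [Finset.mem_Ico] at ht
    rw [hz t ht.1 ht.2]
    simp
  rw [this, zero_add]

lemma Gsum_all_zero (u : Fin r) (T : ℕ)
    (hz : ∀ t, T ≤ t → t < m → cartan Γ u (i (j t)) = 0) :
    Gsum Γ i j m val u T = 0 := by
  apply Finset.sum_eq_zero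
  intro t ht
  rw [Finset.mem_Ico] at ht
  rw [hz t ht.1 ht.2]
  simp

end GsumSec

section Master

variable {r n : ℕ} {Γ : SimpleGraph (Fin r)} {i : ℕ → Fin r} {lam : Fin r → ℤ}
  {m : ℕ} {j : ℕ → ℕ} {val : ℕ → ℝ} {δ : ℝ}

/-- Exact value of `G (v 1) 1`. -/
lemma Gsum_a_one
    (hΓ : Γ.IsAcyclic)
    (hm2 : 2 ≤ m)
    (hadj : ∀ t, 1 ≤ t → t + 1 ≤ m - 1 → Γ.edist (i (j t)) (i (j (t + 1))) = 1)
    (hdst : ∀ s t, 1 ≤ s → s < t → t ≤ m - 1 → i (j s) ≠ i (j t))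
    (hv1 : 2 * val 1 = (lam (i (j 1)) : ℝ) + (if 3 ≤ m then val 2 else 0) + 1.5 * δ) :
    Gsum Γ i j m val (i (j 1)) 1 = (lam (i (j 1)) : ℝ) + 1.5 * δ := by
  have hfar : ∀ s t, 1 ≤ s → s + 2 ≤ t → t ≤ m - 1 →
      cartan Γ (i (j s)) (i (j t)) = 0 := by
    intro s t hs hst htm
    have hne : i (j s) ≠ i (j t) := hdst s t hs (by omega) htm
    have hnadj : ¬ Γ.Adj (i (j s)) (i (j t)) := by
      have := no_shortcut (fun t => i (j t)) hΓ s (t - s) (by omega)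
        (fun t' h1 h2 => (SimpleGraph.edist_eq_one_iff_adj).mp (hadj t' (by omega) (by omega)))
        (fun s' t' h1 h2 h3 => hdst s' t' (by omega) h2 (by omega))
      rw [show s + (t - s) = t from by omega] at this
      exact this
    exact cartan_of_far Γ hne (fun h => hnadj ((SimpleGraph.edist_eq_one_iff_adj).mp h))
  rcases Nat.lt_or_ge m 3 with hm3 | hm3
  · -- m = 2
    have hm : m = 2 := by omega
    rw [Gsum_split Γ i j m val _ 1 (by omega), Gsum_of_ge Γ i j m val _ 2 (by omega),
      cartan_self]
    rw [if_neg (by omega : ¬ 3 ≤ m)] at hv1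
    push_cast
    linarith
  · -- m ≥ 3
    rw [Gsum_split Γ i j m val _ 1 (by omega), Gsum_split Γ i j m val _ 2 (by omega),
      cartan_self]
    have hc12 : cartan Γ (i (j 1)) (i (j 2)) = -1 :=
      cartan_of_adj Γ (hadj 1 (le_refl 1) (by omega))
    rw [hc12]
    have h3 : Gsum Γ i j m val (i (j 1)) 3 = 0 := by
      apply Gsum_all_zero
      intro t ht3 htm
      exact hfar 1 t (le_refl 1) (by omega) (by omega)
    rw [h3]
    rw [if_pos hm3] at hv1
    push_cast
    linarith

end Master

section MasterBound

variable {r n : ℕ} {Γ : SimpleGraph (Fin r)} {i : ℕ → Fin r} {lam : Fin r → ℤ}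
  {m : ℕ} {j : ℕ → ℕ} {val : ℕ → ℝ} {δ : ℝ}

lemma master_bound
    (hΓ : Γ.IsAcyclic) (hlam : ∀ u, 0 ≤ lam u)
    (hm2 : 2 ≤ m)
    (heq : i (j 0) = i (j 1))
    (hadj : ∀ t, 1 ≤ t → t + 1 ≤ m - 1 → Γ.edist (i (j t)) (i (j (t + 1))) = 1)
    (hdst : ∀ s t, 1 ≤ s → s < t → t ≤ m - 1 → i (j s) ≠ i (j t))
    (hδ : 0 < δ)
    (hval0 : val 0 = -δ)
    (hvpos : ∀ t, 1 ≤ t → 0 < val t)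
    (hδv1 : δ ≤ val 1)
    (hdouble : ∀ t, 2 ≤ t → val (t + 1) = 2 * val t)
    (hvend : 3 ≤ m → 2 * val (m - 1) = (lam (i (j (m - 1))) : ℝ))
    (hv1 : 2 * val 1 = (lam (i (j 1)) : ℝ) + (if 3 ≤ m then val 2 else 0) + 1.5 * δ) :
    ∀ (u : Fin r) (T : ℕ), T ≤ m → (u ≠ i (j 1) ∨ T ≠ 1) →
      Gsum Γ i j m val u T ≤ (lam u : ℝ) := by
  have hlamnn : ∀ u : Fin r, (0 : ℝ) ≤ (lam u : ℝ) := fun u => by exact_mod_cast hlam u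
  have hfar : ∀ s t, 1 ≤ s → s + 2 ≤ t → t ≤ m - 1 →
      cartan Γ (i (j s)) (i (j t)) = 0 ∧ cartan Γ (i (j t)) (i (j s)) = 0 := by
    intro s t hs hst htm
    have hne : i (j s) ≠ i (j t) := hdst s t hs (by omega) htm
    have hnadj : ¬ Γ.Adj (i (j s)) (i (j t)) := by
      have := no_shortcut (fun t => i (j t)) hΓ s (t - s) (by omega)
        (fun t' h1 h2 => (SimpleGraph.edist_eq_one_iff_adj).mp (hadj t' (by omega) (by omega)))
        (fun s' t' h1 h2 h3 => hdst s' t' (by omega) h2 (by omega))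
      rw [show s + (t - s) = t from by omega] at this
      exact this
    have h1 : cartan Γ (i (j s)) (i (j t)) = 0 :=
      cartan_of_far Γ hne (fun h => hnadj ((SimpleGraph.edist_eq_one_iff_adj).mp h))
    exact ⟨h1, by rw [cartan_comm]; exact h1⟩
  have hcadj : ∀ t, 1 ≤ t → t + 1 ≤ m - 1 →
      cartan Γ (i (j t)) (i (j (t + 1))) = -1 ∧ cartan Γ (i (j (t + 1))) (i (j t)) = -1 := by
    intro t h1 h2
    have hc : cartan Γ (i (j t)) (i (j (t + 1))) = -1 := cartan_of_adj Γ (hadj t h1 h2)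
    exact ⟨hc, by rw [cartan_comm]; exact hc⟩
  have hGa1 : Gsum Γ i j m val (i (j 1)) 1 = (lam (i (j 1)) : ℝ) + 1.5 * δ :=
    Gsum_a_one hΓ hm2 hadj hdst hv1
  intro u T hTm hexc
  by_cases hon : ∃ t₀, 1 ≤ t₀ ∧ t₀ ≤ m - 1 ∧ u = i (j t₀)
  · obtain ⟨t₀, ht₀1, ht₀m, hu⟩ := hon
    have hzafter : ∀ t, t₀ + 2 ≤ t → t < m → cartan Γ u (i (j t)) = 0 := by
      intro t h1 h2
      rw [hu]
      exact (hfar t₀ t ht₀1 h1 (by omega)).1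
    have hzbefore : ∀ t, 1 ≤ t → t + 2 ≤ t₀ → cartan Γ u (i (j t)) = 0 := by
      intro t h1 h2
      rw [hu]
      exact (hfar t t₀ h1 h2 ht₀m).2
    -- tail value
    set tailv : ℝ := if t₀ + 1 ≤ m - 1 then -val (t₀ + 1) else 0 with htailv
    have htail : Gsum Γ i j m val u (t₀ + 1) = tailv := by
      rw [htailv]
      by_cases hc : t₀ + 1 ≤ m - 1
      · rw [if_pos hc, Gsum_split Γ i j m val u (t₀ + 1) (by omega)]
        have h0 : Gsum Γ i j m val u (t₀ + 2) = 0 :=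
          Gsum_all_zero Γ i j m val u (t₀ + 2) (fun t h1 h2 => hzafter t h1 h2)
        have hcm : cartan Γ u (i (j (t₀ + 1))) = -1 := by
          rw [hu]; exact (hcadj t₀ ht₀1 hc).1
        rw [h0, hcm]
        push_cast
        ring
      · rw [if_neg hc, Gsum_of_ge Γ i j m val u (t₀ + 1) (by omega)]
    have htailnn : tailv ≤ 0 := by
      rw [htailv]
      split_ifs with hc
      · linarith [hvpos (t₀ + 1) (by omega)]
      · exact le_refl 0
    have hGt₀ : Gsum Γ i j m val u t₀ = 2 * val t₀ + tailv := by
      rw [Gsum_split Γ i j m val u t₀ (by omega), htail]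
      have : cartan Γ u (i (j t₀)) = 2 := by rw [hu]; exact cartan_self Γ _
      rw [this]
      push_cast
      ring
    have hGmid : ∀ T', 1 ≤ T' → T' + 1 ≤ t₀ →
        Gsum Γ i j m val u T' = -val (t₀ - 1) + 2 * val t₀ + tailv := by
      intro T' h1 h2
      have hskip : Gsum Γ i j m val u T' = Gsum Γ i j m val u (t₀ - 1) :=
        Gsum_skip Γ i j m val u T' (t₀ - 1) (by omega) (by omega)
          (fun t ht1 ht2 => hzbefore t (by omega) (by omega))
      rw [hskip, Gsum_split Γ i j m val u (t₀ - 1) (by omega)]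
      have hcm : cartan Γ u (i (j (t₀ - 1))) = -1 := by
        rw [hu]
        have := (hcadj (t₀ - 1) (by omega) (by omega)).2
        rw [show t₀ - 1 + 1 = t₀ from by omega] at this
        exact this
      rw [hcm, show t₀ - 1 + 1 = t₀ from by omega, hGt₀]
      push_cast
      ring
    -- the case analysis on T
    by_cases hT0 : T = 0
    · subst hT0
      rw [Gsum_split Γ i j m val u 0 (by omega), hval0]
      have hv01 : cartan Γ u (i (j 0)) = cartan Γ u (i (j 1)) := by rw [heq]
      rcases Nat.lt_or_ge t₀ 2 with ht₀2 | ht₀2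
      · -- t₀ = 1
        have ht₀ : t₀ = 1 := by omega
        subst ht₀
        have hc2 : cartan Γ u (i (j 0)) = 2 := by
          rw [hv01, hu]; exact cartan_self Γ _
        have hG1 : Gsum Γ i j m val u 1 = (lam (i (j 1)) : ℝ) + 1.5 * δ := by
          rw [hu]; exact hGa1
        rw [hc2, hG1, hu]
        push_cast
        linarith
      · rcases Nat.lt_or_ge t₀ 3 with ht₀3 | ht₀3
        · -- t₀ = 2
          have ht₀ : t₀ = 2 := by omega
          subst ht₀
          have hc2 : cartan Γ u (i (j 0)) = -1 := by
            rw [hv01, hu]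
            exact (hcadj 1 (le_refl 1) (by omega)).2
          rw [hc2, hGmid 1 (le_refl 1) (by omega)]
          by_cases hcm : 3 ≤ m - 1
          · have htv : tailv = -val 3 := by rw [htailv, if_pos hcm]
            have h3 : val 3 = 2 * val 2 := hdouble 2 (le_refl 2)
            rw [htv]
            have := hvpos 1 (le_refl 1)
            push_cast
            have hl := hlamnn u
            nlinarith [hδv1]
          · -- m = 3, t₀ = 2 = m - 1
            have hm3 : m = 3 := by omega
            subst hm3
            have htv : tailv = 0 := by rw [htailv, if_neg hcm]
            have hv2 : 2 * val 2 = (lam (i (j 2)) : ℝ) := by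
              have h := hvend (by omega)
              norm_num at h
              exact h
            rw [htv, hu]
            push_cast
            linarith [hδv1]
        · -- t₀ ≥ 3
          have hc0 : cartan Γ u (i (j 0)) = 0 := by
            rw [hv01, hu]
            exact (hfar 1 t₀ (le_refl 1) (by omega) ht₀m).2
          rw [hc0, hGmid 1 (le_refl 1) (by omega)]
          by_cases hcm : t₀ + 1 ≤ m - 1
          · have htv : tailv = -val (t₀ + 1) := by rw [htailv, if_pos hcm]
            have hdb : val (t₀ + 1) = 2 * val t₀ := hdouble t₀ (by omega)
            rw [htv, hdb]
            have := hvpos (t₀ - 1) (by omega)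
            have hl := hlamnn u
            push_cast
            linarith
          · have ht₀e : t₀ = m - 1 := by omega
            have htv : tailv = 0 := by rw [htailv, if_neg hcm]
            have hv2 : 2 * val t₀ = (lam (i (j t₀)) : ℝ) := by
              rw [ht₀e]; exact hvend (by omega)
            rw [htv, hv2, hu]
            have := hvpos (t₀ - 1) (by omega)
            push_cast
            linarith
    · -- 1 ≤ T
      have hT1 : 1 ≤ T := by omega
      rcases Nat.lt_or_ge T t₀ with hTt | hTt
      · -- 1 ≤ T < t₀
        rw [hGmid T hT1 (by omega)]
        by_cases hcm : t₀ + 1 ≤ m - 1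
        · have htv : tailv = -val (t₀ + 1) := by rw [htailv, if_pos hcm]
          have hdb : val (t₀ + 1) = 2 * val t₀ := hdouble t₀ (by omega)
          rw [htv, hdb]
          have := hvpos (t₀ - 1) (by omega)
          have hl := hlamnn u
          linarith
        · have ht₀e : t₀ = m - 1 := by omega
          have htv : tailv = 0 := by rw [htailv, if_neg hcm]
          have hv2 : 2 * val t₀ = (lam (i (j t₀)) : ℝ) := by
            rw [ht₀e]; exact hvend (by omega)
          rw [htv, hv2, hu]
          have := hvpos (t₀ - 1) (by omega)
          linarith
      · rcases Nat.lt_or_ge t₀ T with hTt' | hTt'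
        · -- T ≥ t₀ + 1
          rcases Nat.lt_or_ge (t₀ + 1) T with hTt'' | hTt''
          · -- T ≥ t₀ + 2 : everything vanishes
            have h0 : Gsum Γ i j m val u T = 0 :=
              Gsum_all_zero Γ i j m val u T (fun t h1 h2 => hzafter t (by omega) h2)
            rw [h0]
            exact hlamnn u
          · -- T = t₀ + 1
            have hTe : T = t₀ + 1 := by omega
            rw [hTe, htail]
            linarith [hlamnn u]
        · -- T = t₀
          have hTe : T = t₀ := by omega
          have ht₀2 : 2 ≤ t₀ := by
            by_contra hcon
            have ht₀e : t₀ = 1 := by omega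
            apply hexc.elim
            · intro h; exact h (by rw [hu, ht₀e])
            · intro h; exact h (by omega)
          rw [hTe, hGt₀]
          by_cases hcm : t₀ + 1 ≤ m - 1
          · have htv : tailv = -val (t₀ + 1) := by rw [htailv, if_pos hcm]
            have hdb : val (t₀ + 1) = 2 * val t₀ := hdouble t₀ ht₀2
            rw [htv, hdb]
            linarith [hlamnn u]
          · have ht₀e : t₀ = m - 1 := by omega
            have htv : tailv = 0 := by rw [htailv, if_neg hcm]
            have hv2 : 2 * val t₀ = (lam (i (j t₀)) : ℝ) := by
              rw [ht₀e]; exact hvend (by omega)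
            rw [htv, hv2, hu]
            linarith
  · -- off the walk
    push_neg at hon
    by_cases hax : ∃ ts, 1 ≤ ts ∧ ts ≤ m - 1 ∧ Γ.Adj u (i (j ts))
    · obtain ⟨ts, hts1, htsm, hAdju⟩ := hax
      have huniq : ∀ t, 1 ≤ t → t ≤ m - 1 → t ≠ ts → ¬ Γ.Adj u (i (j t)) := by
        intro t h1 h2 hne hA
        rcases Nat.lt_or_ge t ts with hlt | hge
        · apply no_fork (fun t => i (j t)) hΓ t (ts - t) (by omega)
            (fun t' h1' h2' => (SimpleGraph.edist_eq_one_iff_adj).mp (hadj t' (by omega) (by omega)))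
            (fun s' t' h1' h2' h3' => hdst s' t' (by omega) h2' (by omega))
            u (fun t' h1' h2' => hon t' (by omega) (by omega)) hA
          rw [show t + (ts - t) = ts from by omega]
          exact hAdju
        · have hlt' : ts < t := by omega
          apply no_fork (fun t => i (j t)) hΓ ts (t - ts) (by omega)
            (fun t' h1' h2' => (SimpleGraph.edist_eq_one_iff_adj).mp (hadj t' (by omega) (by omega)))
            (fun s' t' h1' h2' h3' => hdst s' t' (by omega) h2' (by omega))
            u (fun t' h1' h2' => hon t' (by omega) (by omega)) hAdju
          rw [show ts + (t - ts) = t from by omega]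
          exact hA
      have hczero : ∀ t, 1 ≤ t → t < m → t ≠ ts → cartan Γ u (i (j t)) = 0 := by
        intro t h1 h2 hne
        exact cartan_of_far Γ (hon t h1 (by omega))
          (fun h => huniq t h1 (by omega) hne ((SimpleGraph.edist_eq_one_iff_adj).mp h))
      have hcts : cartan Γ u (i (j ts)) = -1 :=
        cartan_of_adj Γ ((SimpleGraph.edist_eq_one_iff_adj).mpr hAdju)
      have hGts : ∀ T', 1 ≤ T' → T' ≤ ts → Gsum Γ i j m val u T' = -val ts := by
        intro T' h1 h2
        have hskip : Gsum Γ i j m val u T' = Gsum Γ i j m val u ts :=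
          Gsum_skip Γ i j m val u T' ts h2 (by omega)
            (fun t ht1 ht2 => hczero t (by omega) (by omega) (by omega))
        rw [hskip, Gsum_split Γ i j m val u ts (by omega), hcts]
        have h0 : Gsum Γ i j m val u (ts + 1) = 0 :=
          Gsum_all_zero Γ i j m val u (ts + 1)
            (fun t ht1 ht2 => hczero t (by omega) ht2 (by omega))
        rw [h0]
        push_cast
        ring
      by_cases hT0 : T = 0
      · subst hT0
        rw [Gsum_split Γ i j m val u 0 (by omega), hval0]
        have hv01 : cartan Γ u (i (j 0)) = cartan Γ u (i (j 1)) := by rw [heq]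
        by_cases hts1' : ts = 1
        · have hc : cartan Γ u (i (j 0)) = -1 := by rw [hv01, ← hts1']; exact hcts
          rw [hc, hGts 1 (le_refl 1) (by omega)]
          rw [hts1']
          push_cast
          linarith [hlamnn u, hδv1]
        · have hc : cartan Γ u (i (j 0)) = 0 := by
            rw [hv01]
            exact hczero 1 (le_refl 1) (by omega) (fun h => hts1' h.symm)
          rw [hc, hGts 1 (le_refl 1) hts1]
          push_cast
          linarith [hlamnn u, hvpos ts hts1]
      · have hT1 : 1 ≤ T := by omega
        rcases Nat.lt_or_ge ts T with hlt | hge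
        · have h0 : Gsum Γ i j m val u T = 0 :=
            Gsum_all_zero Γ i j m val u T
              (fun t ht1 ht2 => hczero t (by omega) ht2 (by omega))
          rw [h0]
          exact hlamnn u
        · rw [hGts T hT1 hge]
          linarith [hlamnn u, hvpos ts hts1]
    · push_neg at hax
      have hcz : ∀ t, t < m → cartan Γ u (i (j t)) = 0 := by
        intro t htm'
        by_cases ht0 : t = 0
        · subst ht0
          have : cartan Γ u (i (j 0)) = cartan Γ u (i (j 1)) := by rw [heq]
          rw [this]
          exact cartan_of_far Γ (hon 1 (le_refl 1) (by omega))
            (fun h => hax 1 (le_refl 1) (by omega) ((SimpleGraph.edist_eq_one_iff_adj).mp h))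
        · exact cartan_of_far Γ (hon t (by omega) (by omega))
            (fun h => hax t (by omega) (by omega) ((SimpleGraph.edist_eq_one_iff_adj).mp h))
      have h0 : Gsum Γ i j m val u T = 0 :=
        Gsum_all_zero Γ i j m val u T (fun t _ h2 => hcz t h2)
      rw [h0]
      exact hlamnn u

end MasterBound

section Tail

variable {r n : ℕ} {Γ : SimpleGraph (Fin r)} {i : ℕ → Fin r} {lam : Fin r → ℤ}
  {m : ℕ} {j : ℕ → ℕ} {val : ℕ → ℝ}

lemma Gsum_tail
    (hΓ : Γ.IsAcyclic) (hm2 : 2 ≤ m)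
    (hadj : ∀ t, 1 ≤ t → t + 1 ≤ m - 1 → Γ.edist (i (j t)) (i (j (t + 1))) = 1)
    (hdst : ∀ s t, 1 ≤ s → s < t → t ≤ m - 1 → i (j s) ≠ i (j t)) :
    ∀ s, 1 ≤ s → s ≤ m - 1 →
      Gsum Γ i j m val (i (j s)) (s + 1) = if s + 1 ≤ m - 1 then -val (s + 1) else 0 := by
  have hfar : ∀ s t, 1 ≤ s → s + 2 ≤ t → t ≤ m - 1 →
      cartan Γ (i (j s)) (i (j t)) = 0 := by
    intro s t hs hst htm
    have hne : i (j s) ≠ i (j t) := hdst s t hs (by omega) htm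
    have hnadj : ¬ Γ.Adj (i (j s)) (i (j t)) := by
      have := no_shortcut (fun t => i (j t)) hΓ s (t - s) (by omega)
        (fun t' h1 h2 => (SimpleGraph.edist_eq_one_iff_adj).mp (hadj t' (by omega) (by omega)))
        (fun s' t' h1 h2 h3 => hdst s' t' (by omega) h2 (by omega))
      rw [show s + (t - s) = t from by omega] at this
      exact this
    exact cartan_of_far Γ hne (fun h => hnadj ((SimpleGraph.edist_eq_one_iff_adj).mp h))
  intro s hs1 hsm
  by_cases hc : s + 1 ≤ m - 1
  · rw [if_pos hc, Gsum_split Γ i j m val _ (s + 1) (by omega)]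
    have h0 : Gsum Γ i j m val (i (j s)) (s + 2) = 0 :=
      Gsum_all_zero Γ i j m val _ (s + 2)
        (fun t h1 h2 => hfar s t hs1 h1 (by omega))
    have hcm : cartan Γ (i (j s)) (i (j (s + 1))) = -1 := cartan_of_adj Γ (hadj s hs1 hc)
    rw [h0, hcm]
    push_cast
    ring
  · rw [if_neg hc, Gsum_of_ge Γ i j m val _ (s + 1) (by omega)]

end Tail

section Forward

variable {r n : ℕ}

lemma walk_imp_not_untwisted (Γ : SimpleGraph (Fin r)) (hΓ : Γ.IsAcyclic)
    (i : ℕ → Fin r) (lam : Fin r → ℤ) (hlam : ∀ v, 0 ≤ lam v)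
    (hwalk : ∃ (m : ℕ) (j : ℕ → ℕ), StrictMono j ∧ (∀ t, t < m → j t < n) ∧
        IsHesitantLamWalk Γ m (fun t => i (j t)) lam) :
    ¬ IsUntwisted n (fun p q => cartan Γ (i p) (i q)) (fun p => lam (i p)) := by
  obtain ⟨m, j, hm2, hmono, hb, heq, hadj, hend, hdst, hP0⟩ := normalized_walk hwalk
  set c : ℕ → ℕ → ℤ := fun p q => cartan Γ (i p) (i q) with hc
  set ℓ : ℕ → ℤ := fun p => lam (i p) with hℓdef
  -- numeric data
  set L : ℝ := (lam (i (j (m - 1))) : ℝ) with hLdef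
  have hL : 0 < L := by rw [hLdef]; exact_mod_cast hend
  set δ : ℝ := L * (2 : ℝ) ^ (-(m : ℤ)) with hδdef
  have hδ : 0 < δ := mul_pos hL (zpow_pos (by norm_num) _)
  set W : ℝ := if 3 ≤ m then L * (2 : ℝ) ^ (2 - (m : ℤ)) else 0 with hWdef
  have hWnn : 0 ≤ W := by
    rw [hWdef]; split_ifs
    · positivity
    · exact le_refl 0
  set val : ℕ → ℝ := fun t =>
    if t = 0 then -δ else if t = 1 then ((lam (i (j 1)) : ℝ) + W + 1.5 * δ) / 2
      else L * (2 : ℝ) ^ ((t : ℤ) - (m : ℤ)) with hvaldef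
  have hval0 : val 0 = -δ := by simp [hvaldef]
  have hval1 : val 1 = ((lam (i (j 1)) : ℝ) + W + 1.5 * δ) / 2 := by
    simp [hvaldef]
  have hgeo : ∀ t, 2 ≤ t → val t = L * (2 : ℝ) ^ ((t : ℤ) - (m : ℤ)) := by
    intro t ht
    rw [hvaldef]
    simp only [if_neg (by omega : t ≠ 0), if_neg (by omega : t ≠ 1)]
  have hdouble : ∀ t, 2 ≤ t → val (t + 1) = 2 * val t := by
    intro t ht
    rw [hgeo t ht, hgeo (t + 1) (by omega)]
    have hcast : ((t + 1 : ℕ) : ℤ) - (m : ℤ) = ((t : ℕ) : ℤ) - (m : ℤ) + 1 := by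
      push_cast; ring
    rw [hcast, zpow_add_one₀ (by norm_num : (2 : ℝ) ≠ 0)]
    ring
  have hlamnn : ∀ u : Fin r, (0 : ℝ) ≤ (lam u : ℝ) := fun u => by exact_mod_cast hlam u
  have hlamAW : 4 * δ ≤ (lam (i (j 1)) : ℝ) + W := by
    rcases Nat.lt_or_ge m 3 with hm3 | hm3
    · have hm : m = 2 := by omega
      have h1 : (lam (i (j 1)) : ℝ) = L := by rw [hLdef, hm]
      have hW0 : W = 0 := by rw [hWdef, if_neg (by omega)]
      have hδe : δ = L * (2 : ℝ) ^ (-(2 : ℤ)) := by rw [hδdef, hm]; norm_num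
      rw [h1, hW0, hδe]
      norm_num
      linarith
    · have hWe : W = L * (2 : ℝ) ^ (2 - (m : ℤ)) := by rw [hWdef, if_pos hm3]
      have h4 : L * (2 : ℝ) ^ (2 - (m : ℤ)) = 4 * δ := by
        rw [hδdef]
        rw [show (2 : ℤ) - (m : ℤ) = -(m : ℤ) + 2 from by ring,
          zpow_add₀ (by norm_num : (2 : ℝ) ≠ 0)]
        norm_num
        ring
      rw [hWe, h4]
      linarith [hlamnn (i (j 1))]
  have hvpos : ∀ t, 1 ≤ t → 0 < val t := by
    intro t ht
    rcases Nat.lt_or_ge t 2 with h2 | h2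
    · have : t = 1 := by omega
      rw [this, hval1]
      have := hlamnn (i (j 1))
      linarith
    · rw [hgeo t h2]
      positivity
  have hδv1 : δ ≤ val 1 := by
    rw [hval1]
    linarith
  have hvend : 3 ≤ m → 2 * val (m - 1) = (lam (i (j (m - 1))) : ℝ) := by
    intro hm3
    rw [hgeo (m - 1) (by omega)]
    have hcast : ((m - 1 : ℕ) : ℤ) - (m : ℤ) = -1 := by
      have : ((m - 1 : ℕ) : ℤ) = (m : ℤ) - 1 := by
        push_cast [Nat.cast_sub (by omega : 1 ≤ m)]
        ring
      rw [this]; ring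
    rw [hcast, hLdef]
    norm_num
    ring
  have hWval2 : W = if 3 ≤ m then val 2 else 0 := by
    rcases Nat.lt_or_ge m 3 with hm3 | hm3
    · rw [hWdef, if_neg (by omega), if_neg (by omega)]
    · rw [hWdef, if_pos hm3, if_pos hm3, hgeo 2 (le_refl 2)]
      norm_num
  have hv1 : 2 * val 1 = (lam (i (j 1)) : ℝ) + (if 3 ≤ m then val 2 else 0) + 1.5 * δ := by
    rw [hval1, ← hWval2]
    ring
  -- master bound
  have master := master_bound hΓ hlam hm2 heq hadj hdst hδ hval0 hvpos hδv1 hdouble hvend hv1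
  have hGa1 : Gsum Γ i j m val (i (j 1)) 1 = (lam (i (j 1)) : ℝ) + 1.5 * δ :=
    Gsum_a_one hΓ hm2 hadj hdst hv1
  have hGtail := Gsum_tail (val := val) hΓ hm2 hadj hdst
  -- walk coordinate bound
  have hwalkcond : ∀ s, 1 ≤ s → s ≤ m - 1 →
      val s ≤ (lam (i (j s)) : ℝ) + (if s + 1 ≤ m - 1 then val (s + 1) else 0) := by
    intro s hs1 hsm
    by_cases hcm : s + 1 ≤ m - 1
    · rw [if_pos hcm]
      rcases Nat.lt_or_ge s 2 with h2 | h2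
      · have hse : s = 1 := by omega
        have hm3 : 3 ≤ m := by omega
        rw [hse, hval1, hWval2, if_pos hm3]
        have := hvpos 2 (by omega)
        have hl := hlamnn (i (j 1))
        have h4 : 4 * δ ≤ (lam (i (j 1)) : ℝ) + val 2 := by
          rw [hWval2, if_pos hm3] at hlamAW
          exact hlamAW
        linarith
      · rw [hdouble s h2]
        have := hvpos s (by omega)
        have hl := hlamnn (i (j s))
        linarith
    · rw [if_neg hcm]
      have hse : s = m - 1 := by omega
      rcases Nat.lt_or_ge m 3 with hm3 | hm3
      · have hme : m = 2 := by omega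
        have hse1 : s = 1 := by omega
        have h1 : (lam (i (j s)) : ℝ) = L := by rw [hLdef, hse]
        have hW0 : W = 0 := by rw [hWdef, if_neg (by omega)]
        rw [hse1, hval1]
        rw [hW0] at hlamAW ⊢
        have h1' : (lam (i (j 1)) : ℝ) = L := by rw [hLdef, hme]
        rw [h1'] at hlamAW ⊢
        rw [hse1] at h1
        linarith
      · have h2v : 2 * val (m - 1) = (lam (i (j (m - 1))) : ℝ) := hvend hm3
        have := hvpos (m - 1) (by omega)
        rw [hse]
        linarith
  -- the point x
  set x : Fin n → ℝ := fun k => ∑ t ∈ Finset.range m, if (k : ℕ) = j t then val t else 0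
    with hxdef
  have hxval : ∀ t, t < m → ∀ k : Fin n, (k : ℕ) = j t → x k = val t := by
    intro t ht k hk
    show (∑ t' ∈ Finset.range m, if (k : ℕ) = j t' then val t' else 0) = val t
    rw [Finset.sum_eq_single t]
    · rw [if_pos hk]
    · intro t' ht' hne
      rw [if_neg]
      intro hk'
      exact hne (hmono.injective (hk.symm.trans hk')).symm
    · intro habs
      exact absurd (Finset.mem_range.mpr ht) habs
  have hxzero : ∀ k : Fin n, (∀ t, t < m → (k : ℕ) ≠ j t) → x k = 0 := by
    intro k hk
    apply Finset.sum_eq_zero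
    intro t ht
    rw [if_neg (hk t (Finset.mem_range.mp ht))]
  -- reduction of the Afun sums to Gsum
  have hared : ∀ w : ℕ,
      (∑ k' : Fin n, if w < (k' : ℕ) then (cartan Γ (i w) (i (k' : ℕ)) : ℝ) * x k' else 0)
        = ∑ t ∈ Finset.range m,
            (if w < j t then (cartan Γ (i w) (i (j t)) : ℝ) * val t else 0) := by
    intro w
    have step1 : ∀ k' : Fin n,
        (if w < (k' : ℕ) then (cartan Γ (i w) (i (k' : ℕ)) : ℝ) * x k' else 0)
          = ∑ t ∈ Finset.range m,
              (if ((k' : ℕ) = j t ∧ w < (k' : ℕ)) then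
                (cartan Γ (i w) (i (j t)) : ℝ) * val t else 0) := by
      intro k'
      by_cases hw : w < (k' : ℕ)
      · rw [if_pos hw]
        have hxk : x k' = ∑ t ∈ Finset.range m, if (k' : ℕ) = j t then val t else 0 := rfl
        rw [hxk, Finset.mul_sum]
        apply Finset.sum_congr rfl
        intro t ht
        by_cases he : (k' : ℕ) = j t
        · rw [if_pos he, if_pos ⟨he, hw⟩, he]
        · rw [if_neg he, if_neg (fun h => he h.1), mul_zero]
      · rw [if_neg hw]
        symm
        apply Finset.sum_eq_zero
        intro t ht
        rw [if_neg (fun h => hw h.2)]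
    rw [Finset.sum_congr rfl (fun k' _ => step1 k'), Finset.sum_comm]
    apply Finset.sum_congr rfl
    intro t ht
    have hjt : j t < n := hb t (Finset.mem_range.mp ht)
    have hstep2 : ∀ k' : Fin n,
        (if ((k' : ℕ) = j t ∧ w < (k' : ℕ)) then (cartan Γ (i w) (i (j t)) : ℝ) * val t else 0)
          = if k' = (⟨j t, hjt⟩ : Fin n) then
              (if w < j t then (cartan Γ (i w) (i (j t)) : ℝ) * val t else 0) else 0 := by
      intro k'
      by_cases he : k' = (⟨j t, hjt⟩ : Fin n)
      · subst he
        rw [if_pos rfl]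
        by_cases hw : w < j t
        · rw [if_pos ⟨rfl, hw⟩, if_pos hw]
        · rw [if_neg (fun h => hw h.2), if_neg hw]
      · have hne : (k' : ℕ) ≠ j t := fun h => he (Fin.ext h)
        rw [if_neg (fun h => hne h.1), if_neg he]
    rw [Finset.sum_congr rfl (fun k' _ => hstep2 k'), Finset.sum_ite_eq' Finset.univ]
    simp
  have hAfun : ∀ (w : ℕ) (T : ℕ), T ≤ m → (∀ t, t < m → (w < j t ↔ T ≤ t)) →
      Afun n c ℓ w x = (lam (i w) : ℝ) - Gsum Γ i j m val (i w) T := by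
    intro w T hTm hT
    unfold Afun
    have hsummand : ∀ k' : Fin n,
        (if w < (k' : ℕ) then ((c w (k' : ℕ) : ℤ) : ℝ) * x k' else 0)
          = (if w < (k' : ℕ) then (cartan Γ (i w) (i (k' : ℕ)) : ℝ) * x k' else 0) :=
      fun k' => rfl
    rw [Finset.sum_congr rfl (fun k' _ => hsummand k'), hared w]
    have hfilter : (Finset.range m).filter (fun t => w < j t) = Finset.Ico T m := by
      ext t
      simp only [Finset.mem_filter, Finset.mem_range, Finset.mem_Ico]
      constructor
      · rintro ⟨h1, h2⟩; exact ⟨(hT t h1).mp h2, h1⟩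
      · rintro ⟨h1, h2⟩; exact ⟨h2, (hT t h2).mpr h1⟩
    have hg : ∑ t ∈ Finset.range m,
        (if w < j t then (cartan Γ (i w) (i (j t)) : ℝ) * val t else 0)
          = Gsum Γ i j m val (i w) T := by
      rw [← Finset.sum_filter, hfilter]
      rfl
    rw [hg]
  have hTex : ∀ k : ℕ, ∃ T, T ≤ m ∧ (∀ t, t < m → (k < j t ↔ T ≤ t)) := by
    intro k
    by_cases hall : ∃ t, t < m ∧ k < j t
    · obtain ⟨hT1, hT2⟩ := Nat.find_spec hall
      refine ⟨Nat.find hall, by omega, fun t ht => ?_⟩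
      constructor
      · intro hk
        exact Nat.find_le ⟨ht, hk⟩
      · intro hTt
        exact lt_of_lt_of_le hT2 (hmono.monotone hTt)
    · push_neg at hall
      refine ⟨m, le_refl m, fun t ht => ?_⟩
      constructor
      · intro hk
        have := hall t ht
        omega
      · intro hk
        omega
  have hTwalk : ∀ s, s < m → (∀ t, t < m → (j s < j t ↔ s + 1 ≤ t)) := by
    intro s hs t ht
    constructor
    · intro h
      by_contra hcon
      have hts : t ≤ s := by omega
      have := hmono.monotone hts
      omega
    · intro h
      exact hmono (by omega)
  have hn1 : 1 ≤ n := by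
    have := hb 0 (by omega)
    omega
  have hxmem : x ∈ twistedCube n c ℓ := by
    intro k
    by_cases hk0 : (k : ℕ) = j 0
    · left
      have hxk : x k = -δ := by rw [hxval 0 (by omega) k hk0]; exact hval0
      have hAe : Afun n c ℓ (k : ℕ) x
          = (lam (i (j 0)) : ℝ) - Gsum Γ i j m val (i (j 0)) 1 := by
        rw [hk0]
        exact hAfun (j 0) 1 (by omega) (fun t ht => by
          have := hTwalk 0 (by omega) t ht
          simpa using this)
      have hG : Gsum Γ i j m val (i (j 0)) 1 = (lam (i (j 1)) : ℝ) + 1.5 * δ := by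
        rw [heq]; exact hGa1
      have hll : (lam (i (j 0)) : ℝ) = (lam (i (j 1)) : ℝ) := by rw [heq]
      rw [hxk, hAe, hG, hll]
      constructor <;> linarith
    · by_cases hks : ∃ s, 1 ≤ s ∧ s < m ∧ (k : ℕ) = j s
      · obtain ⟨s, hs1, hsm, hkeq⟩ := hks
        right
        have hxk : x k = val s := hxval s hsm k hkeq
        have hAe : Afun n c ℓ (k : ℕ) x
            = (lam (i (j s)) : ℝ) - Gsum Γ i j m val (i (j s)) (s + 1) := by
          rw [hkeq]
          exact hAfun (j s) (s + 1) (by omega) (fun t ht => hTwalk s hsm t ht)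
        rw [hxk, hAe, hGtail s hs1 (by omega)]
        refine ⟨le_of_lt (hvpos s hs1), ?_⟩
        have hwc := hwalkcond s hs1 (by omega)
        split_ifs at hwc ⊢ <;> linarith
      · right
        have hxk : x k = 0 := by
          apply hxzero
          intro t ht
          by_cases ht0 : t = 0
          · subst ht0; exact hk0
          · exact fun h => hks ⟨t, by omega, ht, h⟩
        obtain ⟨T, hTm, hT⟩ := hTex (k : ℕ)
        have hAe : Afun n c ℓ (k : ℕ) x
            = (lam (i (k : ℕ)) : ℝ) - Gsum Γ i j m val (i (k : ℕ)) T :=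
          hAfun (k : ℕ) T hTm hT
        have hexc : i (k : ℕ) ≠ i (j 1) ∨ T ≠ 1 := by
          by_cases hT1 : T = 1
          · left
            subst hT1
            have hk_lt : (k : ℕ) < j 1 := (hT 1 (by omega)).mpr (le_refl 1)
            have hk_ge : ¬ ((k : ℕ) < j 0) := by
              intro h
              have := (hT 0 (by omega)).mp h
              omega
            have hgt : j 0 < (k : ℕ) := by omega
            intro hcon
            exact hP0 (k : ℕ) hgt hk_lt (hcon.trans heq.symm)
          · right; exact hT1
        have hmb := master (i (k : ℕ)) T hTm hexc
        rw [hxk, hAe]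
        exact ⟨le_refl 0, by linarith⟩
  -- ρ(x) = -1
  set k0 : Fin n := ⟨j 0, hb 0 (by omega)⟩ with hk0def
  have hxk0 : x k0 = -δ := by
    rw [hxval 0 (by omega) k0 rfl]; exact hval0
  have hsgn : ∀ k : Fin n, gkSgn (x k) = if k = k0 then 1 else -1 := by
    intro k
    by_cases hk : k = k0
    · subst hk
      rw [if_pos rfl]
      unfold gkSgn
      rw [if_pos (by rw [hxk0]; linarith)]
    · rw [if_neg hk]
      have hxnn : 0 ≤ x k := by
        by_cases hks : ∃ s, 1 ≤ s ∧ s < m ∧ (k : ℕ) = j s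
        · obtain ⟨s, hs1, hsm, hkeq⟩ := hks
          rw [hxval s hsm k hkeq]
          exact le_of_lt (hvpos s hs1)
        · rw [hxzero k ?_]
          intro t ht
          by_cases ht0 : t = 0
          · subst ht0
            intro hcon
            exact hk (Fin.ext hcon)
          · exact fun h => hks ⟨t, by omega, ht, h⟩
      unfold gkSgn
      rw [if_neg (by linarith)]
  have hprod : ∏ k : Fin n, gkSgn (x k) = (-1 : ℝ) ^ (n - 1) := by
    rw [Finset.prod_congr rfl (fun k _ => hsgn k)]
    rw [← Finset.prod_erase_mul Finset.univ _ (Finset.mem_univ k0), if_pos rfl, mul_one]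
    rw [Finset.prod_congr rfl (fun k hk => if_neg (Finset.ne_of_mem_erase hk)),
      Finset.prod_const, Finset.card_erase_of_mem (Finset.mem_univ k0),
      Finset.card_univ, Fintype.card_fin]
  intro huntw
  have h1 := huntw.2.2.2 x hxmem
  unfold gkRho at h1
  rw [if_pos hxmem, hprod] at h1
  have key : (-1 : ℝ) ^ n * (-1 : ℝ) ^ (n - 1) = -1 := by
    rw [← pow_add]
    exact Odd.neg_one_pow ⟨n - 1, by omega⟩
  rw [key] at h1
  norm_num at h1

end Forward

/-- With `c` determined from the word `i` and `ℓ_j = λ_{i_j}` for a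
dominant weight `λ`, the Grossberg–Karshon twisted cube `(C(c,ℓ), ρ)` is untwisted if
and only if `i` is hesitant-`λ`-walk-avoiding. -/
theorem untwisted_iff_hesitant_lambda_walk_avoiding
    {r n : ℕ} (Γ : SimpleGraph (Fin r)) (hΓ : Γ.IsAcyclic)
    (i : ℕ → Fin r) (lam : Fin r → ℤ) (hlam : ∀ a, 0 ≤ lam a) :
    IsUntwisted n (fun j k => cartan Γ (i j) (i k)) (fun j => lam (i j)) ↔
      IsHLamWalkAvoiding Γ n i lam := by
  constructor
  · intro hu
    by_contra hav
    unfold IsHLamWalkAvoiding at hav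
    rw [not_not] at hav
    exact walk_imp_not_untwisted Γ hΓ i lam hlam hav hu
  · intro hav
    exact avoiding_imp_untwisted Γ i lam hlam hav
end

section
/- Let G be a complex simply-laced semisimple algebraic group of rank r, let i = (i_1,…,i_n) ∈ [r]^n be a word, let ℓ = (ℓ_1,…,ℓ_n) ∈ ℤ_{≥0}^n, and let c = c(i) be determined from i by c_{jk} = ⟨α_{i_k}, α_{i_j}^∨⟩. If i has a subword (i_{j_0},i_{j_1},…,i_{j_s}) (with j_0 < j_1 < ⋯ < j_s) which is a hesitant jumping (ℓ_{j_0},ℓ_{j_1},…,ℓ_{j_s})-walk, then there exist σ ∈ {+,−}^n and an index k ∈ {1,…,n} such that m_{σ,k} < 0. -/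
open Finset

attribute [local instance] Classical.propDecidable

section Helpers

open SimpleGraph

/-- In `ℕ∞`, any value that is neither `0` nor `1` is at least `2`. -/
private lemma two_le_of_ne (x : ℕ∞) (h0 : x ≠ 0) (h1 : x ≠ 1) : 2 ≤ x := by
  match x with
  | ⊤ => exact le_top
  | (n : ℕ) =>
    have hn0 : n ≠ 0 := by exact_mod_cast h0
    have hn1 : n ≠ 1 := by exact_mod_cast h1
    exact_mod_cast (by omega : 2 ≤ n)

private lemma dSet_le {V : Type*} (Γ : SimpleGraph V) (v : V) (A : Set V) {a : V}
    (ha : a ∈ A) : dSet Γ v A ≤ Γ.edist v a :=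
  iInf₂_le a ha

private lemma exists_adj_of_dSet_eq_one {V : Type*} (Γ : SimpleGraph V) (v : V) (A : Set V)
    (h : dSet Γ v A = 1) : ∃ a ∈ A, Γ.Adj v a := by
  by_contra hcon
  push_neg at hcon
  have h2 : (2 : ℕ∞) ≤ dSet Γ v A := by
    refine le_iInf₂ fun a ha => ?_
    refine two_le_of_ne _ ?_ ?_
    · intro h0
      have hle := dSet_le Γ v A ha
      rw [h0, h] at hle
      have : (1 : ℕ) ≤ 0 := by exact_mod_cast hle
      omega
    · intro h1
      exact hcon a ha ((SimpleGraph.edist_eq_one_iff_adj).mp h1)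
  rw [h] at h2
  have : (2 : ℕ) ≤ 1 := by exact_mod_cast h2
  omega

private lemma ne_of_dSet_eq_one {V : Type*} (Γ : SimpleGraph V) (v : V) (A : Set V)
    (h : dSet Γ v A = 1) {a : V} (ha : a ∈ A) : v ≠ a := by
  intro hva
  subst hva
  have := dSet_le Γ v A ha
  rw [h, SimpleGraph.edist_self] at this
  have : (1 : ℕ) ≤ 0 := by exact_mod_cast this
  omega

end Helpers

/-- necessity. If the word `i` has a subword (indexed by the strictly
increasing sequence `j`) which is a hesitant jumping `ℓ`-walk, then there exist
`σ ∈ {+,-}^n` and an index `k < n` such that `m_{σ,k} < 0`, where the `c_{jk}` are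
determined from `i` via the Cartan integers. -/
theorem exists_negative_cartier_datum_of_hesitant_jumping_ell_walk
    {r n : ℕ} (Γ : SimpleGraph (Fin r)) (hΓ : Γ.IsAcyclic)
    (i : ℕ → Fin r) (ℓ : ℕ → ℤ) (hℓ : ∀ j, j < n → 0 ≤ ℓ j)
    (m : ℕ) (j : ℕ → ℕ) (hj : StrictMono j) (hjn : ∀ t, t < m → j t < n)
    (hw : IsHesitantJumpingLWalk Γ m (fun t => i (j t)) (fun t => ℓ (j t))) :
    ∃ (σ : ℕ → Bool) (k : ℕ), k < n ∧
      mSigma n (fun a b => cartan Γ (i a) (i b)) ℓ σ k < 0 := by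
  classical
  obtain ⟨⟨hm2, h01, hjump⟩, hsum⟩ := hw
  simp only at h01 hsum
  set v : ℕ → Fin r := fun t => i (j t) with hv
  -- the jumping-walk condition rephrased
  have hstep : ∀ s, 2 ≤ s → s < m →
      dSet Γ (v s) {x | ∃ u, 1 ≤ u ∧ u < s ∧ v u = x} = 1 := by
    intro s hs2 hsm
    have h := hjump (s - 1) (by omega) (by omega)
    simp only at h
    have hs1 : s - 1 + 1 = s := by omega
    rw [hs1] at h
    have hset : {x | ∃ k, k < s - 1 ∧ v (k + 1) = x}
        = {x | ∃ u, 1 ≤ u ∧ u < s ∧ v u = x} := by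
      ext x
      constructor
      · rintro ⟨k, hk, rfl⟩; exact ⟨k + 1, by omega, by omega, rfl⟩
      · rintro ⟨u, hu1, hus, rfl⟩
        refine ⟨u - 1, by omega, ?_⟩
        have hu : u - 1 + 1 = u := by omega
        rw [hu]
    rwa [hset] at h
  -- distinctness of the vertices of the tail of the walk
  have hne : ∀ s u, 1 ≤ u → u < s → s < m → v s ≠ v u := by
    intro s u hu1 hus hsm
    exact ne_of_dSet_eq_one Γ (v s) _ (hstep s (by omega) hsm) ⟨u, hu1, hus, rfl⟩
  -- existence of an earlier neighbour
  have hadj_ex : ∀ s, 2 ≤ s → s < m → ∃ u, 1 ≤ u ∧ u < s ∧ Γ.Adj (v s) (v u) := by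
    intro s hs2 hsm
    obtain ⟨a, ⟨u, hu1, hus, rfl⟩, hadj⟩ :=
      exists_adj_of_dSet_eq_one Γ (v s) _ (hstep s hs2 hsm)
    exact ⟨u, hu1, hus, hadj⟩
  -- connectivity of the visited set
  have hconn : ∀ t, 1 ≤ t → t < m → ∀ u, 1 ≤ u → u ≤ t →
      ∃ W : Γ.Walk (v 1) (v u), ∀ x ∈ W.support, ∃ w, 1 ≤ w ∧ w ≤ t ∧ v w = x := by
    intro t
    induction t with
    | zero => omega
    | succ t ih =>
      intro ht1 htm u hu1 hut
      rcases Nat.lt_or_ge u (t + 1) with hu | hu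
      · have ht1' : 1 ≤ t := by omega
        obtain ⟨W, hW⟩ := ih ht1' (by omega) u hu1 (by omega)
        exact ⟨W, fun x hx => by obtain ⟨w, h1, h2, h3⟩ := hW x hx; exact ⟨w, h1, by omega, h3⟩⟩
      · have hu' : u = t + 1 := by omega
        subst hu'
        rcases Nat.lt_or_ge t 1 with ht0 | ht0
        · have : t = 0 := by omega
          subst this
          refine ⟨SimpleGraph.Walk.nil, fun x hx => ⟨1, le_refl 1, le_refl 1, ?_⟩⟩
          have : x = v 1 := by simpa using hx
          exact this.symm
        · obtain ⟨w, hw1, hwt, hadj⟩ := hadj_ex (t + 1) (by omega) htm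
          obtain ⟨W, hW⟩ := ih ht0 (by omega) w hw1 (by omega)
          refine ⟨W.concat hadj.symm, fun x hx => ?_⟩
          rw [SimpleGraph.Walk.support_concat] at hx
          rcases List.mem_append.mp hx with hx | hx
          · obtain ⟨w', h1, h2, h3⟩ := hW x hx
            exact ⟨w', h1, by omega, h3⟩
          · rw [List.mem_singleton] at hx
            exact ⟨t + 1, by omega, le_refl _, hx.symm⟩
  -- uniqueness of the earlier neighbour (uses acyclicity)
  have huniq : ∀ s, 2 ≤ s → s < m → ∀ p q, 1 ≤ p → p < s → 1 ≤ q → q < s →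
      Γ.Adj (v s) (v p) → Γ.Adj (v s) (v q) → p = q := by
    intro s hs2 hsm p q hp1 hps hq1 hqs hap haq
    by_contra hpq
    have hvpq : v p ≠ v q := by
      rcases Nat.lt_or_ge p q with h | h
      · exact (hne q p hp1 h (by omega)).symm
      · exact hne p q hq1 (by omega) (by omega)
    obtain ⟨Wp, hWp⟩ := hconn (s - 1) (by omega) (by omega) p hp1 (by omega)
    obtain ⟨Wq, hWq⟩ := hconn (s - 1) (by omega) (by omega) q hq1 (by omega)
    set W : Γ.Walk (v p) (v q) := Wp.reverse.append Wq with hWdef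
    have hWsupp : ∀ x ∈ W.support, v s ≠ x := by
      intro x hx
      rw [SimpleGraph.Walk.mem_support_append_iff] at hx
      rcases hx with hx | hx
      · rw [SimpleGraph.Walk.support_reverse, List.mem_reverse] at hx
        obtain ⟨w, h1, h2, rfl⟩ := hWp x hx
        exact hne s w h1 (by omega) hsm
      · obtain ⟨w, h1, h2, rfl⟩ := hWq x hx
        exact hne s w h1 (by omega) hsm
    have hP2walk : (SimpleGraph.Walk.cons hap.symm
        (SimpleGraph.Walk.cons haq SimpleGraph.Walk.nil) : Γ.Walk (v p) (v q)).IsPath := by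
      have h1 : v p ≠ v s := (hne s p hp1 hps hsm).symm
      have h2' : v s ≠ v q := hne s q hq1 hqs hsm
      rw [SimpleGraph.Walk.isPath_def]
      simp [h1, h2', hvpq]
    have hP1 := W.toPath
    have heq := (SimpleGraph.isAcyclic_iff_path_unique.mp hΓ) W.toPath ⟨_, hP2walk⟩
    have hvs : v s ∈ (W.toPath : Γ.Walk (v p) (v q)).support := by
      rw [heq]
      simp [SimpleGraph.Walk.support_cons]
    exact hWsupp (v s) (SimpleGraph.Walk.support_toPath_subset W hvs) rfl
  -- the sign vector: `-` exactly on the subword positions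
  set σ : ℕ → Bool := fun q => decide (∃ t, t < m ∧ j t = q) with hσdef
  set c : ℕ → ℕ → ℤ := fun a b => cartan Γ (i a) (i b) with hcdef
  set M : ℕ → ℤ := mSigma n c ℓ σ with hMdef
  have hσ : ∀ q, σ q = true ↔ ∃ t, t < m ∧ j t = q := by
    intro q; simp [hσdef]
  -- unfolding the recursion, removing `attach`
  have hA : ∀ q, M q = if σ q then ℓ q - ∑ k ∈ Finset.Ico (q + 1) n, c q k * M k else 0 := by
    intro q
    rw [hMdef]
    rw [mSigma]
    congr 1
    rw [← Finset.sum_attach (Finset.Ico (q + 1) n) (fun k => c q k * mSigma n c ℓ σ k)]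
  have hB : ∀ q, (∀ t, t < m → j t ≠ q) → M q = 0 := by
    intro q hq
    rw [hA q, if_neg]
    simp only [Bool.not_eq_true]
    rw [Bool.eq_false_iff]
    intro h
    obtain ⟨t, htm, hjt⟩ := (hσ q).mp h
    exact hq t htm hjt
  -- the recursion restricted to the subword
  have hC : ∀ t, t < m →
      M (j t) = ℓ (j t) - ∑ s ∈ Finset.Ico (t + 1) m, c (j t) (j s) * M (j s) := by
    intro t htm
    rw [hA (j t), if_pos ((hσ (j t)).mpr ⟨t, htm, rfl⟩)]
    congr 1
    have hsub : (Finset.Ico (t + 1) m).image j ⊆ Finset.Ico (j t + 1) n := by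
      intro k hk
      obtain ⟨s, hs, rfl⟩ := Finset.mem_image.mp hk
      rw [Finset.mem_Ico] at hs ⊢
      exact ⟨by have := hj (show t < s by omega); omega, hjn s hs.2⟩
    have hzero : ∀ k ∈ Finset.Ico (j t + 1) n, k ∉ (Finset.Ico (t + 1) m).image j →
        c (j t) k * M k = 0 := by
      intro k hk hknot
      have : M k = 0 := by
        refine hB k fun t' ht' hjt' => hknot ?_
        rw [Finset.mem_Ico] at hk
        have htt' : t < t' := by
          have := hj.lt_iff_lt (a := t) (b := t')
          rw [← this]
          omega
        exact Finset.mem_image.mpr ⟨t', Finset.mem_Ico.mpr ⟨by omega, ht'⟩, hjt'⟩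
      rw [this, mul_zero]
    rw [← Finset.sum_subset hsub hzero,
      Finset.sum_image (fun a _ b _ h => hj.injective h)]
  -- values of the Cartan integers along the walk
  have hcneg : ∀ t s, 1 ≤ t → t < s → s < m →
      c (j t) (j s) = if Γ.Adj (v t) (v s) then -1 else 0 := by
    intro t s ht1 hts hsm
    have hne' : i (j t) ≠ i (j s) := (hne s t ht1 hts hsm).symm
    show cartan Γ (i (j t)) (i (j s)) = _
    rw [cartan, if_neg hne']
    by_cases hadj : Γ.Adj (v t) (v s)
    · rw [if_pos (SimpleGraph.edist_eq_one_iff_adj.mpr hadj), if_pos hadj]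
    · rw [if_neg (fun h => hadj (SimpleGraph.edist_eq_one_iff_adj.mp h)), if_neg hadj]
  have hrow : ∀ s, 2 ≤ s → s < m → ∑ t ∈ Finset.Ico 1 s, c (j t) (j s) = -1 := by
    intro s hs2 hsm
    obtain ⟨e, he1, hes, headj⟩ := hadj_ex s hs2 hsm
    rw [Finset.sum_eq_single e]
    · rw [hcneg e s he1 hes hsm, if_pos headj.symm]
    · intro t ht hte
      rw [Finset.mem_Ico] at ht
      rw [hcneg t s ht.1 ht.2 hsm, if_neg]
      intro hadj
      exact hte (huniq s hs2 hsm t e ht.1 ht.2 he1 hes hadj.symm headj)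
    · intro he
      exact absurd (Finset.mem_Ico.mpr ⟨he1, hes⟩) he
  -- the telescoping identity: M (j 1) is the full tail sum
  have hM1 : M (j 1) = ∑ t ∈ Finset.Ico 1 m, ℓ (j t) := by
    have hT : ∑ t ∈ Finset.Ico 1 m, M (j t)
        = ∑ t ∈ Finset.Ico 1 m, ℓ (j t)
          - ∑ t ∈ Finset.Ico 1 m, ∑ s ∈ Finset.Ico (t + 1) m, c (j t) (j s) * M (j s) := by
      rw [← Finset.sum_sub_distrib]
      refine Finset.sum_congr rfl fun t ht => ?_
      rw [Finset.mem_Ico] at ht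
      exact hC t ht.2
    rw [Finset.sum_Ico_Ico_comm' 1 m (fun t s => c (j t) (j s) * M (j s))] at hT
    have hinner : ∑ s ∈ Finset.Ico 1 m, ∑ t ∈ Finset.Ico 1 s, c (j t) (j s) * M (j s)
        = M (j 1) - ∑ s ∈ Finset.Ico 1 m, M (j s) := by
      have key : ∑ s ∈ Finset.Ico 1 m,
          ((∑ t ∈ Finset.Ico 1 s, c (j t) (j s) * M (j s)) + M (j s)) = M (j 1) := by
        rw [Finset.sum_eq_single 1]
        · simp
        · intro s hs hs1
          rw [Finset.mem_Ico] at hs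
          rw [← Finset.sum_mul, hrow s (by omega) hs.2]
          ring
        · intro h1
          exact absurd (Finset.mem_Ico.mpr ⟨le_refl 1, by omega⟩) h1
      rw [Finset.sum_add_distrib] at key
      linarith
    rw [hinner] at hT
    linarith
  -- computing M (j 0)
  have hc01 : c (j 0) (j 1) = 2 := by
    show cartan Γ (i (j 0)) (i (j 1)) = 2
    rw [cartan, if_pos h01]
  have hM0 : M (j 0) = ℓ (j 0) - ℓ (j 1) - M (j 1) := by
    have h0 := hC 0 (by omega)
    rw [Finset.sum_eq_sum_Ico_succ_bot (by omega : (1:ℕ) < m)] at h0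
    have hcongr : ∑ s ∈ Finset.Ico (1 + 1) m, c (j 0) (j s) * M (j s)
        = ∑ s ∈ Finset.Ico (1 + 1) m, c (j 1) (j s) * M (j s) := by
      refine Finset.sum_congr rfl fun s hs => ?_
      congr 1
      show cartan Γ (i (j 0)) (i (j s)) = cartan Γ (i (j 1)) (i (j s))
      rw [h01]
    have h1 := hC 1 (by omega)
    have hrest : ∑ s ∈ Finset.Ico (1 + 1) m, c (j 1) (j s) * M (j s) = ℓ (j 1) - M (j 1) := by
      linarith
    rw [hcongr, hrest, hc01] at h0
    linarith
  refine ⟨σ, j 0, hjn 0 (by omega), ?_⟩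
  show M (j 0) < 0
  rw [hM0, hM1]
  linarith
end

section
/- Let G be a complex simply-laced semisimple algebraic group of rank r, let i = (i_1,…,i_n) ∈ [r]^n be a word, let λ = Σ_{i=1}^r λ_i ϖ_i be a dominant weight, and define ℓ = (ℓ_1,…,ℓ_n) by ℓ_j = λ_{i_j}. Then i is hesitant-jumping-ℓ-walk-avoiding if and only if i is hesitant-λ-walk-avoiding. -/
open Finset

attribute [local instance] Classical.propDecidable

lemma dSet_eq_one_of {V : Type*} (Γ : SimpleGraph V) (v : V) (A : Set V)
    (h1 : ∃ a ∈ A, Γ.edist v a = 1) (h2 : ∀ a ∈ A, v ≠ a) :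
    dSet Γ v A = 1 := by
  obtain ⟨a, ha, hd⟩ := h1
  apply le_antisymm
  · exact le_trans (iInf₂_le a ha) (le_of_eq hd)
  · apply le_iInf₂
    intro b hb
    have hne : Γ.edist v b ≠ 0 := fun h0 =>
      h2 b hb (SimpleGraph.edist_eq_zero_iff.mp h0)
    exact ENat.one_le_iff_ne_zero.mpr hne

lemma exists_edist_one_of_dSet_eq_one {V : Type*} (Γ : SimpleGraph V) (v : V) (A : Set V)
    (h : dSet Γ v A = 1) : ∃ a ∈ A, Γ.edist v a = 1 := by
  by_contra hc
  push_neg at hc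
  have h2 : (2 : ℕ∞) ≤ dSet Γ v A := by
    apply le_iInf₂
    intro a ha
    have h1 : (1 : ℕ∞) ≤ Γ.edist v a := h ▸ iInf₂_le a ha
    have hlt : (1 : ℕ∞) < Γ.edist v a := lt_of_le_of_ne h1 (fun e => hc a ha e.symm)
    exact Order.add_one_le_of_lt hlt
  rw [h] at h2
  norm_num at h2

/-- From a jumping walk tail, extract an increasing path (diagram walk) from
position 1 to any position `t` in `[1, m)`. -/
lemma exists_path_of_jumping {r : ℕ} (Γ : SimpleGraph (Fin r)) (i : ℕ → Fin r)
    (m : ℕ) (j : ℕ → ℕ)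
    (hjump : ∀ s, 1 ≤ s → s < m - 1 →
      dSet Γ (i (j (s + 1))) {x | ∃ k, k < s ∧ i (j (k + 1)) = x} = 1) :
    ∀ t, 1 ≤ t → t < m → ∃ (q : ℕ) (p : ℕ → ℕ), StrictMono p ∧ p 0 = 1 ∧ p q = t ∧
      ∀ s, s < q → Γ.edist (i (j (p s))) (i (j (p (s + 1)))) = 1 := by
  intro t
  induction t using Nat.strong_induction_on with
  | _ t IH =>
    intro ht1 htm
    rcases eq_or_lt_of_le ht1 with h1 | h1
    · exact ⟨0, fun s => s + 1, strictMono_nat_of_lt_succ (fun s => by omega),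
        rfl, h1, fun s hs => by omega⟩
    · have hb : 1 ≤ t - 1 ∧ t - 1 < m - 1 := by omega
      have hd := hjump (t - 1) hb.1 hb.2
      have ht : t - 1 + 1 = t := by omega
      rw [ht] at hd
      obtain ⟨a, ⟨k, hk, hka⟩, hda⟩ := exists_edist_one_of_dSet_eq_one Γ _ _ hd
      obtain ⟨q, p, hp, hp0, hpq, hpath⟩ := IH (k + 1) (by omega) (by omega) (by omega)
      refine ⟨q + 1, fun s => if s ≤ q then p s else t + (s - (q + 1)), ?_, ?_, ?_, ?_⟩
      · apply strictMono_nat_of_lt_succ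
        intro s
        by_cases hs1 : s + 1 ≤ q
        · simp only [if_pos hs1, if_pos (by omega : s ≤ q)]
          exact hp (by omega)
        · by_cases hs2 : s ≤ q
          · have hsq : s = q := by omega
            simp only [if_pos hs2, if_neg hs1]
            subst hsq
            have : p s = k + 1 := hpq
            omega
          · simp only [if_neg hs1, if_neg hs2]
            omega
      · simp [hp0]
      · simp only [if_neg (by omega : ¬ q + 1 ≤ q)]
        omega
      · intro s hs
        by_cases hsq : s < q
        · simp only [if_pos (by omega : s ≤ q), if_pos (by omega : s + 1 ≤ q)]
          exact hpath s hsq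
        · have hsq' : s = q := by omega
          subst hsq'
          simp only [if_pos (le_refl s), if_neg (by omega : ¬ s + 1 ≤ s)]
          have : s + 1 - (s + 1) = 0 := by omega
          rw [this, hpq, Nat.add_zero, SimpleGraph.edist_comm]
          rw [← hka] at hda
          exact hda

/-- From a hesitant `λ`-walk subword, extract a hesitant jumping `ℓ`-walk subword. -/
lemma exists_hjl_of_hlam {r n : ℕ} (Γ : SimpleGraph (Fin r)) (i : ℕ → Fin r)
    (lam : Fin r → ℤ) (hlam : ∀ a, 0 ≤ lam a) :
    ∀ (m : ℕ) (j : ℕ → ℕ), StrictMono j → (∀ t, t < m → j t < n) →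
      IsHesitantLamWalk Γ m (fun t => i (j t)) lam →
      ∃ (m' : ℕ) (j' : ℕ → ℕ), StrictMono j' ∧ (∀ t, t < m' → j' t < n) ∧
        IsHesitantJumpingLWalk Γ m' (fun t => i (j' t)) (fun t => lam (i (j' t))) := by
  intro m
  induction m using Nat.strong_induction_on with
  | _ m IH =>
    intro j hj hjn hwalk
    obtain ⟨h2m, h01, hdiag0, hpos⟩ := hwalk
    simp only at h01 hpos
    have hdiag : ∀ t, t + 1 < m - 1 → Γ.edist (i (j (t + 1))) (i (j (t + 2))) = 1 :=
      fun t ht => hdiag0 t ht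
    by_cases hrep : ∃ a b, 1 ≤ a ∧ a < b ∧ b < m ∧ i (j a) = i (j b)
    · obtain ⟨a, b, ha, hab, hbm, heq⟩ := hrep
      set m' := m - (b - a) with hm'def
      set j' : ℕ → ℕ := fun t => if t < a then j t else j (t + (b - a)) with hj'def
      have hmono' : StrictMono j' := by
        apply strictMono_nat_of_lt_succ
        intro t
        simp only [hj'def]
        split_ifs with h1 h2 h2
        · exact hj (by omega)
        · exact hj (by omega)
        · omega
        · exact hj (by omega)
      apply IH m' (by omega) j' hmono'
      · intro t ht
        simp only [hj'def]
        split_ifs with h1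
        · exact hjn t (by omega)
        · exact hjn (t + (b - a)) (by omega)
      · refine ⟨by omega, ?_, ?_, ?_⟩
        · -- hesitation
          simp only [hj'def, if_pos (by omega : 0 < a)]
          by_cases h1a : 1 < a
          · simpa [if_pos h1a] using h01
          · have ha1 : a = 1 := by omega
            have e1 : 1 + (b - a) = b := by omega
            simp only [if_neg (by omega : ¬ 1 < a), e1]
            rw [← heq, ha1]
            exact h01
        · -- diagram walk
          intro t ht
          simp only [hj'def]
          rcases lt_trichotomy (t + 2) a with hc | hc | hc
          · simp only [if_pos (by omega : t + 1 < a), if_pos hc]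
            exact hdiag t (by omega)
          · simp only [if_pos (by omega : t + 1 < a), if_neg (by omega : ¬ t + 2 < a)]
            have e1 : t + 2 + (b - a) = b := by omega
            rw [e1, ← heq, ← hc]
            exact hdiag t (by omega)
          · by_cases hc2 : t + 1 < a
            · omega
            · simp only [if_neg hc2, if_neg (by omega : ¬ t + 2 < a)]
              have e1 : t + 1 + (b - a) = (t + (b - a)) + 1 := by omega
              have e2 : t + 2 + (b - a) = (t + (b - a)) + 2 := by omega
              rw [e1, e2]
              exact hdiag (t + (b - a)) (by omega)
        · -- endpoint
          simp only [hj'def, if_neg (by omega : ¬ m' - 1 < a)]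
          have e1 : m' - 1 + (b - a) = m - 1 := by omega
          rw [e1]
          exact hpos
    · push_neg at hrep
      refine ⟨m, j, hj, hjn, ⟨h2m, h01, ?_⟩, ?_⟩
      · -- jumping walk
        intro s hs1 hsm
        apply dSet_eq_one_of
        · refine ⟨i (j s), ⟨s - 1, by omega, ?_⟩, ?_⟩
          · show i (j (s - 1 + 1)) = i (j s)
            rw [show s - 1 + 1 = s by omega]
          · have hh := hdiag (s - 1) (by omega)
            rw [show s - 1 + 1 = s by omega, show s - 1 + 2 = s + 1 by omega] at hh
            show Γ.edist (i (j (s + 1))) (i (j s)) = 1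
            rw [SimpleGraph.edist_comm]
            exact hh
        · rintro x ⟨k, hk, rfl⟩
          exact fun e => hrep (k + 1) (s + 1) (by omega) (by omega) (by omega) e.symm
      · -- sum
        simp only [h01, sub_self]
        apply Finset.sum_pos' (fun t _ => hlam _)
        exact ⟨m - 1, Finset.mem_Ico.mpr ⟨by omega, by omega⟩, hpos⟩

lemma exists_hlam_of_hjl {r n : ℕ} (Γ : SimpleGraph (Fin r)) (i : ℕ → Fin r)
    (lam : Fin r → ℤ) (hlam : ∀ a, 0 ≤ lam a)
    (m : ℕ) (j : ℕ → ℕ) (hj : StrictMono j) (hjn : ∀ t, t < m → j t < n)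
    (hwalk : IsHesitantJumpingLWalk Γ m (fun t => i (j t)) (fun t => lam (i (j t)))) :
    ∃ (m' : ℕ) (j' : ℕ → ℕ), StrictMono j' ∧ (∀ t, t < m' → j' t < n) ∧
      IsHesitantLamWalk Γ m' (fun t => i (j' t)) lam := by
  obtain ⟨⟨h2m, h01, hjump0⟩, hsum⟩ := hwalk
  simp only at h01 hsum
  have hjump : ∀ s, 1 ≤ s → s < m - 1 →
      dSet Γ (i (j (s + 1))) {x | ∃ k, k < s ∧ i (j (k + 1)) = x} = 1 :=
    fun s h1 h2 => hjump0 s h1 h2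
  -- find a position with positive lam
  rw [h01, sub_self] at hsum
  have hex : ∃ t ∈ Finset.Ico 1 m, 0 < lam (i (j t)) := by
    by_contra hc
    push_neg at hc
    have : ∑ t ∈ Finset.Ico 1 m, lam (i (j t)) ≤ 0 :=
      Finset.sum_nonpos (fun t ht => hc t ht)
    omega
  obtain ⟨t, ht, htpos⟩ := hex
  rw [Finset.mem_Ico] at ht
  obtain ⟨q, p, hp, hp0, hpq, hpath⟩ :=
    exists_path_of_jumping Γ i m j hjump t ht.1 ht.2
  refine ⟨q + 2, fun s => if s = 0 then j 0 else j (p (s - 1)), ?_, ?_, ?_, ?_, ?_, ?_⟩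
  · apply strictMono_nat_of_lt_succ
    intro s
    rcases Nat.eq_zero_or_pos s with h0 | h0
    · subst h0
      simp only [if_pos rfl, if_neg (by omega : ¬ (1 : ℕ) = 0)]
      rw [show (1 : ℕ) - 1 = 0 by omega, hp0]
      exact hj (by omega)
    · simp only [if_neg (by omega : ¬ s = 0), if_neg (by omega : ¬ s + 1 = 0),
        show s + 1 - 1 = (s - 1) + 1 by omega]
      exact hj (hp (by omega))
  · intro s hs
    rcases Nat.eq_zero_or_pos s with h0 | h0
    · subst h0
      simp only [if_pos rfl]
      exact hjn 0 (by omega)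
    · simp only [if_neg (by omega : ¬ s = 0)]
      have : p (s - 1) ≤ p q := hp.monotone (by omega)
      exact hjn (p (s - 1)) (by omega)
  · omega
  · simp only [if_pos rfl, if_neg (by omega : ¬ (1 : ℕ) = 0)]
    rw [show (1 : ℕ) - 1 = 0 by omega, hp0]
    exact h01
  · intro s hs
    simp only [if_neg (by omega : ¬ s + 1 = 0), if_neg (by omega : ¬ s + 1 + 1 = 0),
      show s + 1 - 1 = s by omega, show s + 1 + 1 - 1 = s + 1 by omega]
    exact hpath s (by omega)
  · simp only [show q + 2 - 1 = q + 1 by omega, if_neg (by omega : ¬ q + 1 = 0),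
      show q + 1 - 1 = q by omega, hpq]
    exact htpos

/-- With `ℓ_j = λ_{i_j}` for a dominant weight `λ`, the word `i` is
hesitant-jumping-`ℓ`-walk-avoiding if and only if it is hesitant-`λ`-walk-avoiding. -/
theorem hjl_walk_avoiding_iff_hlam_walk_avoiding
    {r n : ℕ} (Γ : SimpleGraph (Fin r)) (hΓ : Γ.IsAcyclic)
    (i : ℕ → Fin r) (lam : Fin r → ℤ) (hlam : ∀ a, 0 ≤ lam a) :
    IsHJLWalkAvoiding Γ n i (fun j => lam (i j)) ↔ IsHLamWalkAvoiding Γ n i lam := by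
  unfold IsHJLWalkAvoiding IsHLamWalkAvoiding
  apply not_congr
  constructor
  · rintro ⟨m, j, hj, hjn, hwalk⟩
    exact exists_hlam_of_hjl Γ i lam hlam m j hj hjn hwalk
  · rintro ⟨m, j, hj, hjn, hwalk⟩
    exact exists_hjl_of_hlam Γ i lam hlam m j hj hjn hwalk
end

section
/- Let G be a complex simply-laced semisimple algebraic group of rank r, let i = (i_1,…,i_n) ∈ [r]^n be a word, let λ = Σ_{i=1}^r λ_i ϖ_i be a dominant weight, and define ℓ = (ℓ_1,…,ℓ_n) by ℓ_j = λ_{i_j}. If a subword j = (i_{j_0},i_{j_1},…,i_{j_s}) of i (with j_0 < j_1 < ⋯ < j_s) is a hesitant jumping (ℓ_{j_0},ℓ_{j_1},…,ℓ_{j_s})-walk, then i has a subword which is a hesitant λ-walk. -/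
open Finset

attribute [local instance] Classical.propDecidable

/-- With `ℓ_j = λ_{i_j}` for a dominant weight `λ`: if a subword of
`i` (indexed by the strictly increasing sequence `j`) is a hesitant jumping `ℓ`-walk,
then `i` has a subword which is a hesitant `λ`-walk. -/
theorem exists_hesitant_lam_walk_of_hesitant_jumping_ell_walk
    {r n : ℕ} (Γ : SimpleGraph (Fin r)) (hΓ : Γ.IsAcyclic)
    (i : ℕ → Fin r) (lam : Fin r → ℤ) (hlam : ∀ a, 0 ≤ lam a)
    (m : ℕ) (j : ℕ → ℕ) (hj : StrictMono j) (hjn : ∀ t, t < m → j t < n)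
    (hw : IsHesitantJumpingLWalk Γ m (fun t => i (j t)) (fun t => lam (i (j t)))) :
    ∃ (p : ℕ) (k : ℕ → ℕ), StrictMono k ∧ (∀ t, t < p → k t < n) ∧
      IsHesitantLamWalk Γ p (fun t => i (k t)) lam := by
  obtain ⟨⟨hm2, h01, hjump⟩, hsum⟩ := hw
  set v : ℕ → Fin r := fun t => i (j (t + 1)) with hv
  have h01' : i (j 0) = i (j 1) := h01
  -- find an index with positive lam
  have hex : ∃ t ∈ Finset.Ico 1 m, 0 < lam (i (j t)) := by
    by_contra hc
    push_neg at hc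
    have hnp : ∑ t ∈ Finset.Ico 1 m, lam (i (j t)) ≤ 0 := Finset.sum_nonpos hc
    simp only [h01'] at hsum
    omega
  obtain ⟨tstar, htmem, htpos⟩ := hex
  obtain ⟨ht1, htm⟩ := Finset.mem_Ico.mp htmem
  -- adjacency extraction from the jumping-walk condition
  have adj : ∀ s, 1 ≤ s → s < m - 1 → ∃ k, k < s ∧ Γ.edist (v k) (v s) = 1 := by
    intro s hs1 hs2
    have hd := hjump s hs1 hs2
    change dSet Γ (v s) {x | ∃ k, k < s ∧ v k = x} = 1 at hd
    by_contra hc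
    push_neg at hc
    by_cases heq : ∃ k, k < s ∧ v k = v s
    · obtain ⟨k, hk, hvk⟩ := heq
      have h0 : dSet Γ (v s) {x | ∃ k, k < s ∧ v k = x} ≤ Γ.edist (v s) (v s) :=
        iInf₂_le (v s) ⟨k, hk, hvk⟩
      rw [hd, SimpleGraph.edist_self] at h0
      exact absurd h0 (by simp)
    · push_neg at heq
      have h2 : (2 : ℕ∞) ≤ dSet Γ (v s) {x | ∃ k, k < s ∧ v k = x} := by
        refine le_iInf₂ fun a ha => ?_
        obtain ⟨k, hk, rfl⟩ := ha
        have hne0 : Γ.edist (v s) (v k) ≠ 0 := fun h0 =>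
          heq k hk (SimpleGraph.edist_eq_zero_iff.mp h0).symm
        have hne1 : Γ.edist (v s) (v k) ≠ 1 := by
          rw [SimpleGraph.edist_comm]; exact hc k hk
        rcases eq_or_ne (Γ.edist (v s) (v k)) ⊤ with htop | htop
        · rw [htop]; exact le_top
        · lift Γ.edist (v s) (v k) to ℕ using htop with d hdd
          have hd0 : d ≠ 0 := by exact_mod_cast hne0
          have hd1 : d ≠ 1 := by exact_mod_cast hne1
          exact_mod_cast (by omega : 2 ≤ d)
      rw [hd] at h2
      exact absurd h2 (by norm_num)
  -- build an adjacency chain from 0 to any s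
  have C : ∀ s, s < m - 1 → ∃ q : ℕ, ∃ f : ℕ → ℕ, f 0 = 0 ∧ f q = s ∧
      (∀ a, a < q → f a < f (a + 1) ∧ Γ.edist (v (f a)) (v (f (a + 1))) = 1) ∧
      (∀ a, a ≤ q → f a < m - 1) := by
    intro s
    induction s using Nat.strong_induction_on with
    | _ s IH =>
      intro hs
      rcases Nat.eq_zero_or_pos s with rfl | hpos
      · exact ⟨0, fun _ => 0, rfl, rfl, fun a ha => absurd ha (by omega),
          fun a ha => hs⟩
      · obtain ⟨k, hk, hke⟩ := adj s hpos hs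
        obtain ⟨q, f, hf0, hfq, hchain, hbd⟩ := IH k hk (by omega)
        refine ⟨q + 1, fun a => if a ≤ q then f a else s, by simp [hf0], ?_, ?_, ?_⟩
        · simp
        · intro a ha
          rcases Nat.lt_or_ge a q with h | h
          · have e1 : (if a ≤ q then f a else s) = f a := if_pos (by omega)
            have e2 : (if a + 1 ≤ q then f (a + 1) else s) = f (a + 1) := if_pos (by omega)
            simp only [e1, e2]
            exact hchain a h
          · have haq : a = q := by omega
            have e1 : (if a ≤ q then f a else s) = k := by rw [haq, if_pos le_rfl, hfq]
            have e2 : (if a + 1 ≤ q then f (a + 1) else s) = s := if_neg (by omega)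
            simp only [e1, e2]
            exact ⟨hk, hke⟩
        · intro a ha
          by_cases h : a ≤ q
          · simpa [h] using hbd a h
          · simp only [if_neg h]; omega
  -- apply the chain to sstar = tstar - 1
  obtain ⟨q, f, hf0, hfq, hchain, hbd⟩ := C (tstar - 1) (by omega)
  refine ⟨q + 2, fun t => if t = 0 then j 0 else if t ≤ q + 1 then j (f (t - 1) + 1)
    else j (f q + 1) + (t - (q + 1)), ?_, ?_, ?_, ?_, ?_, ?_⟩
  · apply strictMono_nat_of_lt_succ
    intro t
    rcases Nat.eq_zero_or_pos t with rfl | ht0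
    · simp only [if_pos rfl, if_neg (by omega : ¬ (1 : ℕ) = 0),
        if_pos (by omega : 1 ≤ q + 1)]
      have : f 0 = 0 := hf0
      rw [this]
      exact hj (by omega)
    · rcases Nat.lt_or_ge t (q + 1) with h | h
      · simp only [if_neg (by omega : ¬ t = 0), if_pos (by omega : t ≤ q + 1),
          if_neg (by omega : ¬ t + 1 = 0), if_pos (by omega : t + 1 ≤ q + 1),
          Nat.add_sub_cancel]
        have hlt : f (t - 1) < f (t - 1 + 1) := (hchain (t - 1) (by omega)).1
        have : t - 1 + 1 = t := by omega
        rw [this] at hlt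
        exact hj (by omega)
      · rcases Nat.eq_or_lt_of_le h with heq | hlt
        · simp only [if_neg (by omega : ¬ t = 0), if_pos (by omega : t ≤ q + 1),
            if_neg (by omega : ¬ t + 1 = 0), if_neg (by omega : ¬ t + 1 ≤ q + 1)]
          have : t - 1 = q := by omega
          rw [this]
          omega
        · simp only [if_neg (by omega : ¬ t = 0), if_neg (by omega : ¬ t ≤ q + 1),
            if_neg (by omega : ¬ t + 1 = 0), if_neg (by omega : ¬ t + 1 ≤ q + 1)]
          omega
  · intro t ht
    rcases Nat.eq_zero_or_pos t with rfl | ht0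
    · simp only [if_pos rfl]
      exact hjn 0 (by omega)
    · simp only [if_neg (by omega : ¬ t = 0), if_pos (by omega : t ≤ q + 1)]
      have := hbd (t - 1) (by omega)
      exact hjn _ (by omega)
  · omega
  · simp only [if_pos rfl, if_neg (by omega : ¬ (1 : ℕ) = 0),
      if_pos (by omega : 1 ≤ q + 1), hf0]
    exact h01'
  · intro a ha
    have ha' : a < q := by omega
    simp only [if_neg (by omega : ¬ a + 1 = 0), if_pos (by omega : a + 1 ≤ q + 1),
      if_neg (by omega : ¬ a + 1 + 1 = 0), if_pos (by omega : a + 1 + 1 ≤ q + 1),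
      Nat.add_sub_cancel]
    exact (hchain a ha').2
  · have : q + 2 - 1 = q + 1 := by omega
    rw [this]
    simp only [if_neg (by omega : ¬ q + 1 = 0), if_pos (le_refl (q + 1)),
      Nat.add_sub_cancel, hfq]
    have : tstar - 1 + 1 = tstar := by omega
    rw [this]
    exact htpos
end

section
/- Let n be a positive integer, ℓ = (ℓ_1,…,ℓ_n) ∈ ℤ^n, and let c = {c_{jk} : 1 ≤ j < k ≤ n} be integers. Let j_0 < j_1 < ⋯ < j_s be indices in {1,…,n} such that c_{j_0,j_1} = 2, c_{j_0,p} = c_{j_1,p} for all p > j_1, and c_{j_1,j_t} + c_{j_2,j_t} + ⋯ + c_{j_{t−1},j_t} = −1 for all 2 ≤ t ≤ s. Define σ ∈ {+,−}^n by σ_p = − if p ∈ {j_0, j_1,…, j_s} and σ_p = + otherwise. Then m_{σ,j_1} = ℓ_{j_1} + ℓ_{j_2} + ⋯ + ℓ_{j_s} and m_{σ,j_0} = ℓ_{j_0} − ℓ_{j_1} − (ℓ_{j_1} + ℓ_{j_2} + ⋯ + ℓ_{j_s}). -/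
open Finset

attribute [local instance] Classical.propDecidable

lemma mSigma_of_true (n : ℕ) (c : ℕ → ℕ → ℤ) (ℓ : ℕ → ℤ) (σ : ℕ → Bool) (p : ℕ)
    (h : σ p = true) :
    mSigma n c ℓ σ p = ℓ p - ∑ k ∈ Finset.Ico (p + 1) n, c p k * mSigma n c ℓ σ k := by
  rw [mSigma, if_pos h,
    Finset.sum_attach (Finset.Ico (p + 1) n) (fun k => c p k * mSigma n c ℓ σ k)]

lemma mSigma_of_false (n : ℕ) (c : ℕ → ℕ → ℤ) (ℓ : ℕ → ℤ) (σ : ℕ → Bool) (p : ℕ)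
    (h : σ p = false) : mSigma n c ℓ σ p = 0 := by
  rw [mSigma]
  simp [h]

/-- Let `n` be positive, `ℓ ∈ ℤ^n`, and `c = {c_{jk}}` integers.
Let `j 0 < j 1 < ⋯ < j s` be indices in `{0,…,n-1}` with `c_{j_0,j_1} = 2`,
`c_{j_0,p} = c_{j_1,p}` for all `p > j 1`, and
`c_{j_1,j_t} + ⋯ + c_{j_{t-1},j_t} = -1` for all `2 ≤ t ≤ s`. Define `σ ∈ {+,-}^n` by
`σ_p = -` (that is, `true`) exactly when `p ∈ {j 0, …, j s}`. Then
`m_{σ,j_1} = ℓ_{j_1} + ⋯ + ℓ_{j_s}` and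
`m_{σ,j_0} = ℓ_{j_0} - ℓ_{j_1} - (ℓ_{j_1} + ⋯ + ℓ_{j_s})`. -/
theorem mSigma_values (n : ℕ) (hn : 0 < n) (c : ℕ → ℕ → ℤ) (ℓ : ℕ → ℤ)
    (s : ℕ) (hs : 1 ≤ s) (j : ℕ → ℕ) (hj : StrictMono j)
    (hjn : ∀ t, t ≤ s → j t < n)
    (h1 : c (j 0) (j 1) = 2) (h2 : ∀ p, j 1 < p → c (j 0) p = c (j 1) p)
    (h3 : ∀ t, 2 ≤ t → t ≤ s → ∑ u ∈ Finset.Ico 1 t, c (j u) (j t) = -1)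
    (σ : ℕ → Bool) (hσ : ∀ p, σ p = true ↔ ∃ t, t ≤ s ∧ j t = p) :
    mSigma n c ℓ σ (j 1) = ∑ t ∈ Finset.Icc 1 s, ℓ (j t) ∧
      mSigma n c ℓ σ (j 0) = ℓ (j 0) - ℓ (j 1) - ∑ t ∈ Finset.Icc 1 s, ℓ (j t) := by

  set M : ℕ → ℤ := fun t => mSigma n c ℓ σ (j t) with hM
  -- the recursion restricted to the subsequence
  have key : ∀ r, r ≤ s →
      M r = ℓ (j r) - ∑ t ∈ Finset.Icc (r + 1) s, c (j r) (j t) * M t := by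
    intro r hr
    have hσr : σ (j r) = true := (hσ (j r)).2 ⟨r, hr, rfl⟩
    rw [hM]
    simp only
    rw [mSigma_of_true n c ℓ σ (j r) hσr]
    congr 1
    have hsub : (Finset.Icc (r + 1) s).image j ⊆ Finset.Ico (j r + 1) n := by
      intro k hk
      obtain ⟨t, ht, rfl⟩ := Finset.mem_image.mp hk
      have ht' := Finset.mem_Icc.mp ht
      have : j r < j t := hj (by omega)
      exact Finset.mem_Ico.mpr ⟨by omega, hjn t ht'.2⟩
    rw [← Finset.sum_subset hsub, Finset.sum_image (fun a _ b _ h => hj.injective h)]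
    intro k hk hk'
    rcases Bool.eq_false_or_eq_true (σ k) with hb | hb
    case _ =>
      obtain ⟨t, ht, rfl⟩ := (hσ k).1 hb
      have hkr := (Finset.mem_Ico.mp hk).1
      have : r < t := by
        by_contra h
        exact absurd (hj.le_iff_le.mpr (not_lt.mp h)) (by omega)
      exact absurd (Finset.mem_image.mpr ⟨t, Finset.mem_Icc.mpr ⟨this, ht⟩, rfl⟩) hk'
    case _ => rw [mSigma_of_false n c ℓ σ k hb, mul_zero]
  -- sum the recursion over r ∈ Icc 1 s
  have hsum : ∑ r ∈ Finset.Icc 1 s, M r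
      = ∑ r ∈ Finset.Icc 1 s, ℓ (j r)
        - ∑ r ∈ Finset.Icc 1 s, ∑ t ∈ Finset.Icc (r + 1) s, c (j r) (j t) * M t := by
    rw [← Finset.sum_sub_distrib]
    exact Finset.sum_congr rfl fun r hr => key r (Finset.mem_Icc.mp hr).2
  -- swap the double sum
  have hswap : ∑ r ∈ Finset.Icc 1 s, ∑ t ∈ Finset.Icc (r + 1) s, c (j r) (j t) * M t
      = ∑ t ∈ Finset.Icc 1 s, (∑ u ∈ Finset.Ico 1 t, c (j u) (j t)) * M t := by
    have h1' : ∀ r ∈ Finset.Icc 1 s,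
        ∑ t ∈ Finset.Icc (r + 1) s, c (j r) (j t) * M t
        = ∑ t ∈ Finset.Icc 1 s, if r < t then c (j r) (j t) * M t else 0 := by
      intro r hr
      rw [← Finset.sum_filter]
      congr 1
      ext t
      simp only [Finset.mem_Icc, Finset.mem_filter]
      have := Finset.mem_Icc.mp hr
      omega
    rw [Finset.sum_congr rfl h1', Finset.sum_comm]
    refine Finset.sum_congr rfl fun t ht => ?_
    rw [← Finset.sum_filter]
    have : (Finset.Icc 1 s).filter (fun r => r < t) = Finset.Ico 1 t := by
      ext r
      simp only [Finset.mem_Icc, Finset.mem_filter, Finset.mem_Ico]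
      have := Finset.mem_Icc.mp ht
      omega
    rw [this, Finset.sum_mul]
  -- evaluate the coefficient sum using h3
  have hins : Finset.Icc 1 s = insert 1 (Finset.Icc 2 s) := by
    ext t; simp only [Finset.mem_Icc, Finset.mem_insert]; omega
  have hnotmem : (1 : ℕ) ∉ Finset.Icc 2 s := by simp
  have hcoef : ∑ t ∈ Finset.Icc 1 s, (∑ u ∈ Finset.Ico 1 t, c (j u) (j t)) * M t
      = - ∑ t ∈ Finset.Icc 2 s, M t := by
    rw [hins, Finset.sum_insert hnotmem]
    simp only [Finset.Ico_self, Finset.sum_empty, zero_mul, zero_add]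
    rw [← Finset.sum_neg_distrib]
    refine Finset.sum_congr rfl fun t ht => ?_
    have ht' := Finset.mem_Icc.mp ht
    rw [h3 t ht'.1 ht'.2]
    ring
  have hsplitM : ∑ r ∈ Finset.Icc 1 s, M r = M 1 + ∑ t ∈ Finset.Icc 2 s, M t := by
    rw [hins, Finset.sum_insert hnotmem]
  have hM1 : M 1 = ∑ t ∈ Finset.Icc 1 s, ℓ (j t) := by
    have := hsum
    rw [hswap, hcoef, hsplitM] at this
    omega
  constructor
  · have e1 : mSigma n c ℓ σ (j 1) = M 1 := rfl
    rw [e1, hM1]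
  have hsplit0 : ∑ t ∈ Finset.Icc 1 s, c (j 0) (j t) * M t
      = c (j 0) (j 1) * M 1 + ∑ t ∈ Finset.Icc 2 s, c (j 0) (j t) * M t := by
    rw [hins, Finset.sum_insert hnotmem]
  have hc02 : ∑ t ∈ Finset.Icc 2 s, c (j 0) (j t) * M t
      = ∑ t ∈ Finset.Icc 2 s, c (j 1) (j t) * M t := by
    refine Finset.sum_congr rfl fun t ht => ?_
    have ht' := Finset.mem_Icc.mp ht
    rw [h2 (j t) (hj (by omega))]
  have hkey1 : M 1 = ℓ (j 1) - ∑ t ∈ Finset.Icc 2 s, c (j 1) (j t) * M t := by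
    have := key 1 hs
    simpa using this
  rw [← hM1]
  have e0 : mSigma n c ℓ σ (j 0) = M 0 := rfl
  rw [e0]
  have := key 0 (by omega)
  rw [hsplit0, h1, hc02] at this
  omega
end
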